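/- arXiv:2006.00125 — 6 statements merged into one kernel-verified Lean document; each statement's English description precedes it below -/
import Mathlib

section
/- Let A ∈ ℝ^{n×n}, B ∈ ℝ^{n×m}, and K ∈ ℝ^{m×n}. Then for every x ∈ ℝⁿ, ‖Π_{R(B)⊥} A x‖² = ‖(A − BK)x‖² − ‖Π_{R(B)}(A − BK)x‖² ≤ ‖(A − BK)x‖². Consequently, if there exists K with ‖A − BK‖ < 1 (operator norm), i.e., the pair (A,B) is contractible, then (A,B) is regularizable. -/
open Matrix

noncomputable section

/-- The Euclidean norm on `Fin n → ℝ`. -/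
def eucNorm {n : ℕ} (x : Fin n → ℝ) : ℝ := Real.sqrt (∑ i, (x i) ^ 2)

/-- `P` is the matrix of the orthogonal projection of `ℝⁿ` onto the subspace `V`:
the unique symmetric idempotent matrix whose range is `V`. -/
def IsProjMatrix {n : ℕ} (P : Matrix (Fin n) (Fin n) ℝ) (V : Submodule ℝ (Fin n → ℝ)) : Prop :=
  P.IsSymm ∧ P * P = P ∧ LinearMap.range P.mulVecLin = V

/-- A real square matrix is Schur stable if every complex eigenvalue has modulus `< 1`,
i.e. its spectral radius is `< 1`. -/
def SchurStable {n : ℕ} (M : Matrix (Fin n) (Fin n) ℝ) : Prop :=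
  ∀ (μ : ℂ) (v : Fin n → ℂ), v ≠ 0 →
    (M.map (algebraMap ℝ ℂ)).mulVec v = μ • v → ‖μ‖ < 1

/-- The operator norm of a matrix induced by the Euclidean vector norm:
`‖M‖ = sup {‖M u‖ : ‖u‖ = 1}`. -/
def l2OpNorm {n m : ℕ} (M : Matrix (Fin n) (Fin m) ℝ) : ℝ :=
  sSup {c | ∃ x : Fin m → ℝ, eucNorm x = 1 ∧ c = eucNorm (M.mulVec x)}

/-- The instability number of order `t` of `A`:
`M_t(A) = sup { ∏ i ‖A v i‖ : (v 1, …, v t) orthonormal in ℝⁿ }`. -/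
def instabilityNumber {n : ℕ} (A : Matrix (Fin n) (Fin n) ℝ) (t : ℕ) : ℝ :=
  sSup {c | ∃ v : Fin t → (Fin n → ℝ),
    (∀ i j, v i ⬝ᵥ v j = if i = j then 1 else 0) ∧ c = ∏ i, eucNorm (A.mulVec (v i))}

lemma eucNorm_sq {n : ℕ} (x : Fin n → ℝ) : eucNorm x ^ 2 = ∑ i, (x i) ^ 2 :=
  Real.sq_sqrt (Finset.sum_nonneg fun i _ => sq_nonneg _)

lemma eucNorm_nonneg {n : ℕ} (x : Fin n → ℝ) : 0 ≤ eucNorm x := Real.sqrt_nonneg _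

lemma eucNorm_smul {n : ℕ} (t : ℝ) (x : Fin n → ℝ) : eucNorm (t • x) = |t| * eucNorm x := by
  unfold eucNorm
  rw [← Real.sqrt_sq_eq_abs, ← Real.sqrt_mul (sq_nonneg t), Finset.mul_sum]
  congr 1; apply Finset.sum_congr rfl; intro i _
  simp [Pi.smul_apply, smul_eq_mul]; ring

lemma eucNorm_pos {n : ℕ} {x : Fin n → ℝ} (hx : x ≠ 0) : 0 < eucNorm x := by
  have h : 0 < ∑ i, (x i) ^ 2 := by
    obtain ⟨i, hi⟩ := Function.ne_iff.mp hx
    have hi' : x i ≠ 0 := by simpa using hi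
    have : (0:ℝ) < x i ^ 2 := by positivity
    have h2 := Finset.single_le_sum (f := fun i => (x i)^2) (fun i _ => sq_nonneg _)
      (Finset.mem_univ i)
    linarith
  exact Real.sqrt_pos.mpr h

/-- Pythagoras for a symmetric idempotent. -/
lemma pythag {n : ℕ} (P : Matrix (Fin n) (Fin n) ℝ) (hs : P.IsSymm) (hi : P * P = P)
    (y : Fin n → ℝ) :
    eucNorm y ^ 2 = eucNorm (P.mulVec y) ^ 2 + eucNorm ((1 - P).mulVec y) ^ 2 := by
  have h1 : (1 - P).mulVec y = y - P.mulVec y := by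
    rw [Matrix.sub_mulVec, Matrix.one_mulVec]
  have hcross : (P.mulVec y) ⬝ᵥ (y - P.mulVec y) = 0 := by
    have h2 : (P.mulVec y) ⬝ᵥ (P.mulVec y) = (P.mulVec y) ⬝ᵥ y := by
      rw [Matrix.dotProduct_mulVec, ← Matrix.mulVec_transpose, hs.eq,
        Matrix.mulVec_mulVec, hi]
    rw [dotProduct_sub, h2, sub_self]
  rw [eucNorm_sq, eucNorm_sq, eucNorm_sq, h1]
  have key : ∀ i, (y i) ^ 2 =
      (P.mulVec y i) ^ 2 + ((y - P.mulVec y) i) ^ 2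
        + 2 * (P.mulVec y i * (y - P.mulVec y) i) := by
    intro i; simp only [Pi.sub_apply]; ring
  calc ∑ i, (y i) ^ 2
      = ∑ i, ((P.mulVec y i) ^ 2 + ((y - P.mulVec y) i) ^ 2
        + 2 * (P.mulVec y i * (y - P.mulVec y) i)) := Finset.sum_congr rfl (fun i _ => key i)
    _ = (∑ i, (P.mulVec y i) ^ 2) + (∑ i, ((y - P.mulVec y) i) ^ 2)
        + 2 * ((P.mulVec y) ⬝ᵥ (y - P.mulVec y)) := by
        rw [Finset.sum_add_distrib, Finset.sum_add_distrib, ← Finset.mul_sum]; rfl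
    _ = _ := by rw [hcross]; ring

/-- The operator-norm bound. -/
lemma opNorm_bound {n m : ℕ} (M : Matrix (Fin n) (Fin m) ℝ) (x : Fin m → ℝ) :
    eucNorm (M.mulVec x) ≤ (sSup {c | ∃ x : Fin m → ℝ, eucNorm x = 1 ∧ c = eucNorm (M.mulVec x)}) * eucNorm x := by
  set S := {c | ∃ x : Fin m → ℝ, eucNorm x = 1 ∧ c = eucNorm (M.mulVec x)} with hS
  have hbdd : BddAbove S := by
    refine ⟨Real.sqrt (∑ i, ∑ j, M i j ^ 2), ?_⟩
    rintro c ⟨u, hu, rfl⟩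
    unfold eucNorm
    apply Real.sqrt_le_sqrt
    have hu2 : ∑ j, (u j) ^ 2 = 1 := by
      have := eucNorm_sq u; rw [hu] at this; simpa using this.symm
    calc ∑ i, (M.mulVec u i) ^ 2
        ≤ ∑ i, (∑ j, M i j ^ 2) * (∑ j, (u j) ^ 2) := by
          refine Finset.sum_le_sum fun i _ => ?_
          have : (M *ᵥ u) i = ∑ j, M i j * u j := rfl
          rw [this]
          exact Finset.sum_mul_sq_le_sq_mul_sq _ _ _
      _ = ∑ i, ∑ j, M i j ^ 2 := by
          apply Finset.sum_congr rfl; intro i _; rw [hu2, mul_one]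
  by_cases hx : x = 0
  · subst hx
    simp only [Matrix.mulVec_zero]
    have : eucNorm (0 : Fin n → ℝ) = 0 := by simp [eucNorm]
    have h0 : eucNorm (0 : Fin m → ℝ) = 0 := by simp [eucNorm]
    rw [this, h0, mul_zero]
  · have hr : 0 < eucNorm x := eucNorm_pos hx
    set u : Fin m → ℝ := (eucNorm x)⁻¹ • x with hu
    have hu1 : eucNorm u = 1 := by
      rw [hu, eucNorm_smul, abs_of_pos (by positivity), inv_mul_cancel₀ (ne_of_gt hr)]
    have hmem : eucNorm (M.mulVec u) ∈ S := ⟨u, hu1, rfl⟩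
    have hle : eucNorm (M.mulVec u) ≤ sSup S := le_csSup hbdd hmem
    have hxu : x = (eucNorm x) • u := by
      rw [hu, smul_smul, mul_inv_cancel₀ (ne_of_gt hr), one_smul]
    calc eucNorm (M.mulVec x) = eucNorm (M.mulVec ((eucNorm x) • u)) := by rw [← hxu]
      _ = eucNorm x * eucNorm (M.mulVec u) := by
          rw [Matrix.mulVec_smul, eucNorm_smul, abs_of_pos hr]
      _ ≤ eucNorm x * sSup S := by
          exact mul_le_mul_of_nonneg_left hle (le_of_lt hr)
      _ = sSup S * eucNorm x := mul_comm _ _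


lemma keyLemma {n m : ℕ} (A : Matrix (Fin n) (Fin n) ℝ) (B : Matrix (Fin n) (Fin m) ℝ)
    (PB : Matrix (Fin n) (Fin n) ℝ)
    (hPB : IsProjMatrix PB (LinearMap.range B.mulVecLin))
    (K : Matrix (Fin m) (Fin n) ℝ) (x : Fin n → ℝ) :
    eucNorm (((1 - PB) * A).mulVec x) ^ 2
        = eucNorm ((A - B * K).mulVec x) ^ 2
          - eucNorm (PB.mulVec ((A - B * K).mulVec x)) ^ 2 := by
  obtain ⟨hs, hi, hr⟩ := hPB
  -- PB fixes the range of B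
  have hfix : ∀ z : Fin m → ℝ, PB.mulVec (B.mulVec z) = B.mulVec z := by
    intro z
    have hmem : B.mulVec z ∈ LinearMap.range PB.mulVecLin := by
      rw [hr]; exact ⟨z, rfl⟩
    obtain ⟨u, hu⟩ := hmem
    rw [Matrix.mulVecLin_apply] at hu
    rw [← hu, Matrix.mulVec_mulVec, hi]
  have hkey : ((1 - PB) * A).mulVec x = (1 - PB).mulVec ((A - B * K).mulVec x) := by
    rw [← Matrix.mulVec_mulVec, Matrix.sub_mulVec]
    rw [Matrix.sub_mulVec, Matrix.sub_mulVec, Matrix.one_mulVec, Matrix.one_mulVec]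
    rw [Matrix.mulVec_sub PB, ← Matrix.mulVec_mulVec x B K, hfix]
    abel
  rw [hkey]
  have := pythag PB hs hi ((A - B * K).mulVec x)
  linarith

lemma keyLe {n m : ℕ} (A : Matrix (Fin n) (Fin n) ℝ) (B : Matrix (Fin n) (Fin m) ℝ)
    (PB : Matrix (Fin n) (Fin n) ℝ)
    (hPB : IsProjMatrix PB (LinearMap.range B.mulVecLin))
    (K : Matrix (Fin m) (Fin n) ℝ) (x : Fin n → ℝ) :
    eucNorm (((1 - PB) * A).mulVec x) ≤ eucNorm ((A - B * K).mulVec x) := by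
  have h := keyLemma A B PB hPB K x
  have h1 := sq_nonneg (eucNorm (PB.mulVec ((A - B * K).mulVec x)))
  have h2 := eucNorm_nonneg (((1 - PB) * A).mulVec x)
  have h3 := eucNorm_nonneg ((A - B * K).mulVec x)
  nlinarith


lemma schurPart {n m : ℕ} (A : Matrix (Fin n) (Fin n) ℝ) (B : Matrix (Fin n) (Fin m) ℝ)
    (PB : Matrix (Fin n) (Fin n) ℝ)
    (hPB : IsProjMatrix PB (LinearMap.range B.mulVecLin))
    (K' : Matrix (Fin m) (Fin n) ℝ) (hK' : l2OpNorm (A - B * K') < 1) :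
    SchurStable ((1 - PB) * A) := by
  intro μ v hv heq
  set Atil := (1 - PB) * A with hAtil
  set c := l2OpNorm (A - B * K') with hc
  set p := μ.re with hp
  set q := μ.im with hq
  set a : Fin n → ℝ := fun i => (v i).re with ha_def
  set b : Fin n → ℝ := fun i => (v i).im with hb_def
  have hcomp : ∀ i, ∑ j, ((Atil i j : ℝ) : ℂ) * v j = μ * v i := by
    intro i
    have h := congrFun heq i
    simpa [Matrix.mulVec, dotProduct, Matrix.map_apply, Pi.smul_apply,
      smul_eq_mul] using h
  have ha : Atil.mulVec a = fun i => p * a i - q * b i := by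
    funext i
    have h := congrArg Complex.re (hcomp i)
    rw [Complex.re_sum] at h
    simp only [Complex.mul_re, Complex.ofReal_re, Complex.ofReal_im, zero_mul,
      sub_zero] at h
    exact h
  have hb : Atil.mulVec b = fun i => q * a i + p * b i := by
    funext i
    have h := congrArg Complex.im (hcomp i)
    rw [Complex.im_sum] at h
    simp only [Complex.mul_im, Complex.ofReal_re, Complex.ofReal_im, zero_mul,
      add_zero] at h
    have h0 : (Atil *ᵥ b) i = ∑ x, Atil i x * (v x).im := rfl
    rw [h0, h]; ring
  have hsum : eucNorm (Atil.mulVec a) ^ 2 + eucNorm (Atil.mulVec b) ^ 2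
      = (p ^ 2 + q ^ 2) * (eucNorm a ^ 2 + eucNorm b ^ 2) := by
    rw [ha, hb, eucNorm_sq, eucNorm_sq, eucNorm_sq, eucNorm_sq, mul_add,
      Finset.mul_sum, Finset.mul_sum, ← Finset.sum_add_distrib, ← Finset.sum_add_distrib]
    apply Finset.sum_congr rfl; intro i _; ring
  have bound : ∀ x : Fin n → ℝ, eucNorm (Atil.mulVec x) ≤ c * eucNorm x := by
    intro x
    calc eucNorm (Atil.mulVec x) ≤ eucNorm ((A - B * K').mulVec x) := keyLe A B PB hPB K' x
      _ ≤ c * eucNorm x := by rw [hc]; exact opNorm_bound _ x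
  have hvne : a ≠ 0 ∨ b ≠ 0 := by
    by_contra h
    push_neg at h
    apply hv
    funext i
    have h1 : a i = 0 := by rw [h.1]; rfl
    have h2 : b i = 0 := by rw [h.2]; rfl
    exact Complex.ext h1 h2
  have hpos : 0 < eucNorm a ^ 2 + eucNorm b ^ 2 := by
    rcases hvne with h | h
    · have := eucNorm_pos h
      nlinarith [eucNorm_nonneg b]
    · have := eucNorm_pos h
      nlinarith [eucNorm_nonneg a]
  have hc0 : 0 ≤ c := by
    rcases hvne with h | h
    · have h1 := bound a
      have h2 := eucNorm_pos h
      nlinarith [eucNorm_nonneg (Atil.mulVec a)]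
    · have h1 := bound b
      have h2 := eucNorm_pos h
      nlinarith [eucNorm_nonneg (Atil.mulVec b)]
  have h1 : eucNorm (Atil.mulVec a) ^ 2 ≤ c ^ 2 * eucNorm a ^ 2 := by
    have := bound a
    nlinarith [eucNorm_nonneg (Atil.mulVec a), eucNorm_nonneg a]
  have h2 : eucNorm (Atil.mulVec b) ^ 2 ≤ c ^ 2 * eucNorm b ^ 2 := by
    have := bound b
    nlinarith [eucNorm_nonneg (Atil.mulVec b), eucNorm_nonneg b]
  have hfin : p ^ 2 + q ^ 2 < 1 := by
    have h3 : (p ^ 2 + q ^ 2) * (eucNorm a ^ 2 + eucNorm b ^ 2)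
        ≤ c ^ 2 * (eucNorm a ^ 2 + eucNorm b ^ 2) := by nlinarith [h1, h2, hsum]
    have h4 : p ^ 2 + q ^ 2 ≤ c ^ 2 := le_of_mul_le_mul_right h3 hpos
    nlinarith
  have habs := Complex.sq_norm μ
  rw [Complex.normSq_apply] at habs
  nlinarith [norm_nonneg μ]

/-- A contractible pair is regularizable. -/
theorem stmt1 {n m : ℕ} (A : Matrix (Fin n) (Fin n) ℝ) (B : Matrix (Fin n) (Fin m) ℝ)
    (PB : Matrix (Fin n) (Fin n) ℝ)
    (hPB : IsProjMatrix PB (LinearMap.range B.mulVecLin))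
    (K : Matrix (Fin m) (Fin n) ℝ) :
    (∀ x : Fin n → ℝ,
      eucNorm (((1 - PB) * A).mulVec x) ^ 2
          = eucNorm ((A - B * K).mulVec x) ^ 2
            - eucNorm (PB.mulVec ((A - B * K).mulVec x)) ^ 2 ∧
      eucNorm (((1 - PB) * A).mulVec x) ^ 2 ≤ eucNorm ((A - B * K).mulVec x) ^ 2) ∧
    ((∃ K' : Matrix (Fin m) (Fin n) ℝ, l2OpNorm (A - B * K') < 1) →
      SchurStable ((1 - PB) * A)) := by
  refine ⟨fun x => ⟨keyLemma A B PB hPB K x, ?_⟩, ?_⟩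
  · have h := keyLemma A B PB hPB K x
    have h2 := sq_nonneg (eucNorm (PB.mulVec ((A - B * K).mulVec x)))
    linarith
  · rintro ⟨K', hK'⟩
    exact schurPart A B PB hPB K' hK'
end
end

section
/- If the pair (A,B), with A ∈ ℝ^{n×n} and B ∈ ℝ^{n×m}, is regularizable, then the pair (A, B^⊤) is detectable in the PBH sense: there is no complex eigenpair (λ, v) of A (v ≠ 0, A v = λ v over ℂ) with |λ| ≥ 1 and B^⊤ v = 0. -/
open Matrix

noncomputable section

/-- A regularizable pair `(A,B)` has `(A, Bᵀ)` detectable in the PBH sense. -/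
theorem stmt3 {n m : ℕ} (A : Matrix (Fin n) (Fin n) ℝ) (B : Matrix (Fin n) (Fin m) ℝ)
    (PB : Matrix (Fin n) (Fin n) ℝ)
    (hPB : IsProjMatrix PB (LinearMap.range B.mulVecLin))
    (hreg : SchurStable ((1 - PB) * A)) :
    ¬ ∃ (μ : ℂ) (v : Fin n → ℂ), v ≠ 0 ∧
        (A.map (algebraMap ℝ ℂ)).mulVec v = μ • v ∧
        1 ≤ ‖μ‖ ∧
        (Bᵀ.map (algebraMap ℝ ℂ)).mulVec v = 0 := by
  rintro ⟨μ, v, hv, hAv, hμ, hBv⟩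
  obtain ⟨hsymm, hidem, hrange⟩ := hPB
  -- The complexified projection kills v, since Bᵀ v = 0.
  have hPBv : (PB.map (algebraMap ℝ ℂ)).mulVec v = 0 := by
    funext i
    have hcol : (fun j => PB j i) ∈ LinearMap.range B.mulVecLin := by
      rw [← hrange]
      refine ⟨Pi.single i 1, ?_⟩
      funext j
      simp [Matrix.mulVecLin_apply, Matrix.mulVec_single]
    obtain ⟨w, hw⟩ := hcol
    have hw' : ∀ j, (∑ k, B j k * w k) = PB j i := by
      intro j
      have := congrFun hw j
      simpa [Matrix.mulVecLin_apply, Matrix.mulVec, dotProduct] using this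
    have hBv' : ∀ k, (∑ j, (algebraMap ℝ ℂ) (B j k) * v j) = 0 := by
      intro k
      have := congrFun hBv k
      simpa [Matrix.mulVec, dotProduct, Matrix.map_apply, Matrix.transpose_apply]
        using this
    simp only [Matrix.mulVec, dotProduct, Matrix.map_apply, Pi.zero_apply]
    calc ∑ j, (algebraMap ℝ ℂ) (PB i j) * v j
        = ∑ j, (algebraMap ℝ ℂ) (PB j i) * v j := by
          refine Finset.sum_congr rfl fun j _ => ?_
          rw [hsymm.apply i j]
      _ = ∑ j, (algebraMap ℝ ℂ) (∑ k, B j k * w k) * v j := by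
          refine Finset.sum_congr rfl fun j _ => ?_
          rw [hw' j]
      _ = ∑ j, ∑ k, (algebraMap ℝ ℂ) (w k) * ((algebraMap ℝ ℂ) (B j k) * v j) := by
          refine Finset.sum_congr rfl fun j _ => ?_
          rw [map_sum, Finset.sum_mul]
          refine Finset.sum_congr rfl fun k _ => ?_
          rw [_root_.map_mul]; ring
      _ = ∑ k, (algebraMap ℝ ℂ) (w k) * (∑ j, (algebraMap ℝ ℂ) (B j k) * v j) := by
          rw [Finset.sum_comm]
          exact Finset.sum_congr rfl fun k _ => (Finset.mul_sum _ _ _).symm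
      _ = 0 := by
          refine Finset.sum_eq_zero fun k _ => ?_
          rw [hBv' k, mul_zero]
  -- μ is an eigenvalue of (1 - PB) * A with eigenvector v.
  have heig : (((1 - PB) * A).map (algebraMap ℝ ℂ)).mulVec v = μ • v := by
    have hmap : ((1 - PB) * A).map (algebraMap ℝ ℂ)
        = (1 - PB.map (algebraMap ℝ ℂ)) * A.map (algebraMap ℝ ℂ) := by
      rw [Matrix.map_mul]
      congr 1
      rw [Matrix.map_sub _ (map_sub _), Matrix.map_one _ (map_zero _) (map_one _)]
    rw [hmap, ← Matrix.mulVec_mulVec, hAv, Matrix.mulVec_smul, Matrix.sub_mulVec,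
      Matrix.one_mulVec, hPBv, sub_zero]
  exact absurd (hreg μ v hv heig) (not_lt.2 hμ)
end
end

section
/- Let A_1, …, A_N ∈ ℝ^{n×n}, let S ⊆ ℝⁿ be a linear subspace with orthogonal projection matrix Π_S, and suppose there exist symmetric positive definite matrices P_1, …, P_N ∈ ℝ^{n×n} and matrices G, H ∈ ℝ^{n×n} such that for every i = 1,…,N the 2n×2n block matrix [[G A_i + A_i^⊤ G^⊤ − P_i, A_i^⊤ H^⊤ − G], [H A_i − G^⊤, Π_S P_i Π_S − H − H^⊤]] is negative definite. Let B ∈ ℝ^{n×m} be such that for every i = 1,…,N the 2n×2n block matrix [[P_i, P_i Π_{R(B)⊥}], [Π_{R(B)⊥} P_i, Π_S P_i Π_S]] is positive semidefinite. Then for every A_α in the convex hull of {A_1, …, A_N} (i.e., A_α = Σ_i α_i A_i with α_i ∈ [0,1], Σ_i α_i = 1), the pair (A_α, B) is regularizable. -/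
open Matrix

lemma quadBlock {n : ℕ} (A B C D : Matrix (Fin n) (Fin n) ℝ) (x y : Fin n → ℝ) :
    Sum.elim x y ⬝ᵥ (Matrix.fromBlocks A B C D) *ᵥ Sum.elim x y
      = x ⬝ᵥ A *ᵥ x + x ⬝ᵥ B *ᵥ y + y ⬝ᵥ C *ᵥ x + y ⬝ᵥ D *ᵥ y := by
  rw [Matrix.fromBlocks_mulVec]
  simp [sumElim_dotProduct_sumElim, dotProduct_add]
  ring

lemma sum_smul_mulVec {N n : ℕ} (α : Fin N → ℝ) (M : Fin N → Matrix (Fin n) (Fin n) ℝ)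
    (y : Fin n → ℝ) :
    (∑ i, α i • M i) *ᵥ y = ∑ i, α i • ((M i) *ᵥ y) := by
  ext j
  simp only [Matrix.mulVec, dotProduct, Matrix.sum_apply, Matrix.smul_apply,
    smul_eq_mul, Finset.sum_mul, Finset.sum_apply, Pi.smul_apply]
  rw [Finset.sum_comm]
  simp [Finset.mul_sum, mul_assoc]

lemma dot_sum_smul {N n : ℕ} (α : Fin N → ℝ) (M : Fin N → Matrix (Fin n) (Fin n) ℝ)
    (x y : Fin n → ℝ) :
    x ⬝ᵥ (∑ i, α i • M i) *ᵥ y = ∑ i, α i * (x ⬝ᵥ (M i) *ᵥ y) := by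
  rw [sum_smul_mulVec]
  simp only [dotProduct, Finset.sum_apply, Pi.smul_apply, smul_eq_mul, Finset.mul_sum]
  rw [Finset.sum_comm]
  exact Finset.sum_congr rfl fun i _ => Finset.sum_congr rfl fun j _ => by ring


noncomputable section

/-- Robust regularizability of polytopic uncertain systems. -/
theorem stmt8 {n m N : ℕ} (A : Fin N → Matrix (Fin n) (Fin n) ℝ)
    (S : Submodule ℝ (Fin n → ℝ)) (PiS : Matrix (Fin n) (Fin n) ℝ)
    (hPiS : IsProjMatrix PiS S)
    (P : Fin N → Matrix (Fin n) (Fin n) ℝ) (hP : ∀ i, (P i).PosDef)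
    (G H : Matrix (Fin n) (Fin n) ℝ)
    (hLMI : ∀ i, (-(Matrix.fromBlocks
        (G * A i + (A i)ᵀ * Gᵀ - P i) ((A i)ᵀ * Hᵀ - G)
        (H * A i - Gᵀ) (PiS * P i * PiS - H - Hᵀ))).PosDef)
    (B : Matrix (Fin n) (Fin m) ℝ) (PB : Matrix (Fin n) (Fin n) ℝ)
    (hPB : IsProjMatrix PB (LinearMap.range B.mulVecLin))
    (hB : ∀ i, (Matrix.fromBlocks
        (P i) (P i * (1 - PB))
        ((1 - PB) * P i) (PiS * P i * PiS)).PosSemidef)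
    (α : Fin N → ℝ) (hα0 : ∀ i, 0 ≤ α i) (hα1 : ∑ i, α i = 1) :
    SchurStable ((1 - PB) * (∑ i, α i • A i)) := by
  obtain ⟨hPBsymm, -, -⟩ := hPB
  classical
  set Q : Matrix (Fin n) (Fin n) ℝ := 1 - PB with hQdef
  have hQsymm : Qᵀ = Q := by
    rw [hQdef, Matrix.transpose_sub, Matrix.transpose_one, hPBsymm.eq]
  set Aα := ∑ i, α i • A i with hAαdef
  set Pα := ∑ i, α i • P i with hPαdef
  have hexist : ∃ i, 0 < α i := by
    by_contra h
    push_neg at h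
    have h0 : ∀ i, α i = 0 := fun i => le_antisymm (h i) (hα0 i)
    simp [h0] at hα1
  obtain ⟨i0, hi0⟩ := hexist
  -- quadratic form facts for Pα
  have hPαpos : ∀ x : Fin n → ℝ, x ≠ 0 → 0 < x ⬝ᵥ Pα *ᵥ x := by
    intro x hx
    rw [hPαdef, dot_sum_smul]
    refine Finset.sum_pos' (fun i _ => mul_nonneg (hα0 i) ?_) ⟨i0, Finset.mem_univ _, mul_pos hi0 ?_⟩
    · have := (hP i).posSemidef.dotProduct_mulVec_nonneg x; simpa using this
    · have := (hP i0).dotProduct_mulVec_pos hx; simpa using this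
  have hPαnonneg : ∀ x : Fin n → ℝ, 0 ≤ x ⬝ᵥ Pα *ᵥ x := by
    intro x
    rw [hPαdef, dot_sum_smul]
    refine Finset.sum_nonneg fun i _ => mul_nonneg (hα0 i) ?_
    have := (hP i).posSemidef.dotProduct_mulVec_nonneg x; simpa using this
  -- linearity identities
  have hGA : G * Aα = ∑ i, α i • (G * A i) := by
    rw [hAαdef, Finset.mul_sum]
    exact Finset.sum_congr rfl fun i _ => (mul_smul_comm _ _ _)
  have hAG : Aαᵀ * Gᵀ = ∑ i, α i • ((A i)ᵀ * Gᵀ) := by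
    rw [hAαdef, Matrix.transpose_sum, Finset.sum_mul]
    exact Finset.sum_congr rfl fun i _ => by rw [Matrix.transpose_smul, smul_mul_assoc]
  have hAH : Aαᵀ * Hᵀ = ∑ i, α i • ((A i)ᵀ * Hᵀ) := by
    rw [hAαdef, Matrix.transpose_sum, Finset.sum_mul]
    exact Finset.sum_congr rfl fun i _ => by rw [Matrix.transpose_smul, smul_mul_assoc]
  have hHA : H * Aα = ∑ i, α i • (H * A i) := by
    rw [hAαdef, Finset.mul_sum]
    exact Finset.sum_congr rfl fun i _ => (mul_smul_comm _ _ _)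
  have hPP : PiS * Pα * PiS = ∑ i, α i • (PiS * P i * PiS) := by
    rw [hPαdef, Finset.mul_sum, Finset.sum_mul]
    exact Finset.sum_congr rfl fun i _ => by rw [mul_smul_comm, smul_mul_assoc]
  -- key B : vertex LMIs imply Lyapunov-type strict inequality
  have keyB : ∀ x : Fin n → ℝ, x ≠ 0 →
      (Aα *ᵥ x) ⬝ᵥ (PiS * Pα * PiS) *ᵥ (Aα *ᵥ x) < x ⬝ᵥ Pα *ᵥ x := by
    intro x hx
    set y := Aα *ᵥ x with hy
    have hz : Sum.elim x y ≠ 0 := by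
      intro h
      apply hx
      ext j
      exact congrFun h (Sum.inl j)
    have hvertex : ∀ i,
        Sum.elim x y ⬝ᵥ (Matrix.fromBlocks
          (G * A i + (A i)ᵀ * Gᵀ - P i) ((A i)ᵀ * Hᵀ - G)
          (H * A i - Gᵀ) (PiS * P i * PiS - H - Hᵀ)) *ᵥ Sum.elim x y < 0 := by
      intro i
      have h := (hLMI i).dotProduct_mulVec_pos hz
      rw [Matrix.neg_mulVec, dotProduct_neg, star_trivial] at h
      linarith
    -- expanded scalar form of each vertex quadratic form
    have hexpand : ∀ i,
        Sum.elim x y ⬝ᵥ (Matrix.fromBlocks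
          (G * A i + (A i)ᵀ * Gᵀ - P i) ((A i)ᵀ * Hᵀ - G)
          (H * A i - Gᵀ) (PiS * P i * PiS - H - Hᵀ)) *ᵥ Sum.elim x y
        = x ⬝ᵥ (G * A i) *ᵥ x + x ⬝ᵥ ((A i)ᵀ * Gᵀ) *ᵥ x - x ⬝ᵥ (P i) *ᵥ x
          + x ⬝ᵥ ((A i)ᵀ * Hᵀ) *ᵥ y - x ⬝ᵥ G *ᵥ y
          + y ⬝ᵥ (H * A i) *ᵥ x - y ⬝ᵥ Gᵀ *ᵥ x
          + y ⬝ᵥ (PiS * P i * PiS) *ᵥ y - y ⬝ᵥ H *ᵥ y - y ⬝ᵥ Hᵀ *ᵥ y := by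
      intro i
      rw [quadBlock]
      simp only [Matrix.add_mulVec, Matrix.sub_mulVec, dotProduct_add, dotProduct_sub]
      ring
    have hsumlt : ∑ i, α i * (Sum.elim x y ⬝ᵥ (Matrix.fromBlocks
          (G * A i + (A i)ᵀ * Gᵀ - P i) ((A i)ᵀ * Hᵀ - G)
          (H * A i - Gᵀ) (PiS * P i * PiS - H - Hᵀ)) *ᵥ Sum.elim x y) < 0 := by
      have : ∑ i, α i * (Sum.elim x y ⬝ᵥ (Matrix.fromBlocks
          (G * A i + (A i)ᵀ * Gᵀ - P i) ((A i)ᵀ * Hᵀ - G)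
          (H * A i - Gᵀ) (PiS * P i * PiS - H - Hᵀ)) *ᵥ Sum.elim x y)
          < ∑ _i : Fin N, (0:ℝ) := by
        refine Finset.sum_lt_sum (fun i _ => mul_nonpos_of_nonneg_of_nonpos (hα0 i) (le_of_lt (hvertex i)))
          ⟨i0, Finset.mem_univ _, mul_neg_of_pos_of_neg hi0 (hvertex i0)⟩
      simpa using this
    -- the convex combination equals the Aα,Pα expression
    have hcomb : ∑ i, α i * (Sum.elim x y ⬝ᵥ (Matrix.fromBlocks
          (G * A i + (A i)ᵀ * Gᵀ - P i) ((A i)ᵀ * Hᵀ - G)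
          (H * A i - Gᵀ) (PiS * P i * PiS - H - Hᵀ)) *ᵥ Sum.elim x y)
        = y ⬝ᵥ (PiS * Pα * PiS) *ᵥ y - x ⬝ᵥ Pα *ᵥ x := by
      have e1 : x ⬝ᵥ (G * Aα) *ᵥ x = x ⬝ᵥ G *ᵥ y := by
        rw [hy, ← Matrix.mulVec_mulVec]
      have e2 : x ⬝ᵥ (Aαᵀ * Gᵀ) *ᵥ x = y ⬝ᵥ Gᵀ *ᵥ x := by
        rw [← Matrix.mulVec_mulVec, Matrix.dotProduct_mulVec x Aαᵀ, Matrix.vecMul_transpose, hy,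
          Matrix.dotProduct_mulVec y Gᵀ, Matrix.vecMul_transpose]
      have e3 : x ⬝ᵥ (Aαᵀ * Hᵀ) *ᵥ y = y ⬝ᵥ Hᵀ *ᵥ y := by
        rw [← Matrix.mulVec_mulVec, Matrix.dotProduct_mulVec x Aαᵀ, Matrix.vecMul_transpose, hy]
      have e4 : y ⬝ᵥ (H * Aα) *ᵥ x = y ⬝ᵥ H *ᵥ y := by
        rw [hy, ← Matrix.mulVec_mulVec]
      calc ∑ i, α i * (Sum.elim x y ⬝ᵥ (Matrix.fromBlocks
          (G * A i + (A i)ᵀ * Gᵀ - P i) ((A i)ᵀ * Hᵀ - G)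
          (H * A i - Gᵀ) (PiS * P i * PiS - H - Hᵀ)) *ᵥ Sum.elim x y)
          = ∑ i, (α i * (x ⬝ᵥ (G * A i) *ᵥ x) + α i * (x ⬝ᵥ ((A i)ᵀ * Gᵀ) *ᵥ x)
              - α i * (x ⬝ᵥ (P i) *ᵥ x)
              + α i * (x ⬝ᵥ ((A i)ᵀ * Hᵀ) *ᵥ y) - α i * (x ⬝ᵥ G *ᵥ y)
              + α i * (y ⬝ᵥ (H * A i) *ᵥ x) - α i * (y ⬝ᵥ Gᵀ *ᵥ x)
              + α i * (y ⬝ᵥ (PiS * P i * PiS) *ᵥ y) - α i * (y ⬝ᵥ H *ᵥ y)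
              - α i * (y ⬝ᵥ Hᵀ *ᵥ y)) := by
            refine Finset.sum_congr rfl fun i _ => ?_
            rw [hexpand i]; ring
        _ = ∑ i, α i * (x ⬝ᵥ (G * A i) *ᵥ x) + ∑ i, α i * (x ⬝ᵥ ((A i)ᵀ * Gᵀ) *ᵥ x)
              - ∑ i, α i * (x ⬝ᵥ (P i) *ᵥ x)
              + ∑ i, α i * (x ⬝ᵥ ((A i)ᵀ * Hᵀ) *ᵥ y) - ∑ i, α i * (x ⬝ᵥ G *ᵥ y)
              + ∑ i, α i * (y ⬝ᵥ (H * A i) *ᵥ x) - ∑ i, α i * (y ⬝ᵥ Gᵀ *ᵥ x)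
              + ∑ i, α i * (y ⬝ᵥ (PiS * P i * PiS) *ᵥ y) - ∑ i, α i * (y ⬝ᵥ H *ᵥ y)
              - ∑ i, α i * (y ⬝ᵥ Hᵀ *ᵥ y) := by
            simp [Finset.sum_add_distrib, Finset.sum_sub_distrib]
        _ = (x ⬝ᵥ (G * Aα) *ᵥ x) + (x ⬝ᵥ (Aαᵀ * Gᵀ) *ᵥ x) - (x ⬝ᵥ Pα *ᵥ x)
              + (x ⬝ᵥ (Aαᵀ * Hᵀ) *ᵥ y) - (x ⬝ᵥ G *ᵥ y)
              + (y ⬝ᵥ (H * Aα) *ᵥ x) - (y ⬝ᵥ Gᵀ *ᵥ x)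
              + (y ⬝ᵥ (PiS * Pα * PiS) *ᵥ y) - (y ⬝ᵥ H *ᵥ y) - (y ⬝ᵥ Hᵀ *ᵥ y) := by
            have hconst : ∀ c : ℝ, ∑ i, α i * c = c := fun c => by
              rw [← Finset.sum_mul, hα1, one_mul]
            rw [← dot_sum_smul α (fun i => G * A i) x x,
              ← dot_sum_smul α (fun i => (A i)ᵀ * Gᵀ) x x,
              ← dot_sum_smul α P x x,
              ← dot_sum_smul α (fun i => (A i)ᵀ * Hᵀ) x y,
              ← dot_sum_smul α (fun i => H * A i) y x,
              ← dot_sum_smul α (fun i => PiS * P i * PiS) y y,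
              ← hGA, ← hAG, ← hAH, ← hHA, ← hPP, ← hPαdef,
              hconst, hconst, hconst, hconst]
        _ = y ⬝ᵥ (PiS * Pα * PiS) *ᵥ y - x ⬝ᵥ Pα *ᵥ x := by
            rw [e1, e2, e3, e4]; ring
    linarith [hsumlt, hcomb.symm.trans_lt hsumlt]
  -- key C : from hB, Q-projected quadratic form dominated by PiS-projected one
  have keyC : ∀ w : Fin n → ℝ,
      (Q *ᵥ w) ⬝ᵥ Pα *ᵥ (Q *ᵥ w) ≤ w ⬝ᵥ (PiS * Pα * PiS) *ᵥ w := by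
    intro w
    have hvert : ∀ i, (Q *ᵥ w) ⬝ᵥ (P i) *ᵥ (Q *ᵥ w) ≤ w ⬝ᵥ (PiS * P i * PiS) *ᵥ w := by
      intro i
      have h := (hB i).dotProduct_mulVec_nonneg (Sum.elim (-(Q *ᵥ w)) w)
      rw [star_trivial, quadBlock] at h
      have c1 : (-(Q *ᵥ w)) ⬝ᵥ (P i) *ᵥ (-(Q *ᵥ w)) = (Q *ᵥ w) ⬝ᵥ (P i) *ᵥ (Q *ᵥ w) := by
        rw [Matrix.mulVec_neg, neg_dotProduct, dotProduct_neg, neg_neg]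
      have c2 : (-(Q *ᵥ w)) ⬝ᵥ (P i * Q) *ᵥ w = -((Q *ᵥ w) ⬝ᵥ (P i) *ᵥ (Q *ᵥ w)) := by
        rw [neg_dotProduct, ← Matrix.mulVec_mulVec]
      have hswap : w ᵥ* Q = Q *ᵥ w := by
        rw [← hQsymm, Matrix.vecMul_transpose, hQsymm]
      have c3 : w ⬝ᵥ (Q * P i) *ᵥ (-(Q *ᵥ w)) = -((Q *ᵥ w) ⬝ᵥ (P i) *ᵥ (Q *ᵥ w)) := by
        rw [Matrix.mulVec_neg, dotProduct_neg, ← Matrix.mulVec_mulVec,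
          Matrix.dotProduct_mulVec w Q, hswap]
      rw [c1, c2, c3] at h
      linarith
    calc (Q *ᵥ w) ⬝ᵥ Pα *ᵥ (Q *ᵥ w)
        = ∑ i, α i * ((Q *ᵥ w) ⬝ᵥ (P i) *ᵥ (Q *ᵥ w)) := by
          rw [hPαdef, dot_sum_smul]
      _ ≤ ∑ i, α i * (w ⬝ᵥ (PiS * P i * PiS) *ᵥ w) :=
          Finset.sum_le_sum fun i _ => mul_le_mul_of_nonneg_left (hvert i) (hα0 i)
      _ = w ⬝ᵥ (PiS * Pα * PiS) *ᵥ w := by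
          rw [hPP, dot_sum_smul]
  -- Lyapunov inequality for the closed loop matrix
  have hLyap : ∀ x : Fin n → ℝ, x ≠ 0 →
      ((Q * Aα) *ᵥ x) ⬝ᵥ Pα *ᵥ ((Q * Aα) *ᵥ x) < x ⬝ᵥ Pα *ᵥ x := by
    intro x hx
    rw [← Matrix.mulVec_mulVec]
    exact lt_of_le_of_lt (keyC (Aα *ᵥ x)) (keyB x hx)
  have hLyapLe : ∀ x : Fin n → ℝ,
      ((Q * Aα) *ᵥ x) ⬝ᵥ Pα *ᵥ ((Q * Aα) *ᵥ x) ≤ x ⬝ᵥ Pα *ᵥ x := by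
    intro x
    by_cases hx : x = 0
    · subst hx; simp
    · exact le_of_lt (hLyap x hx)
  -- Schur stability
  intro μ v hv heig
  set M := Q * Aα with hMdef
  set a : Fin n → ℝ := fun j => (v j).re with ha
  set b : Fin n → ℝ := fun j => (v j).im with hb
  have hmain : ∀ j, (∑ k, (M j k : ℂ) * v k) = μ * v j := by
    intro j
    have h := congrFun heig j
    simpa [Matrix.mulVec, dotProduct, Matrix.map_apply, Pi.smul_apply,
      smul_eq_mul] using h
  have hRe : M *ᵥ a = μ.re • a - μ.im • b := by
    funext j
    have h := congrArg Complex.re (hmain j)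
    rw [Complex.re_sum] at h
    simp only [Complex.mul_re, Complex.ofReal_re, Complex.ofReal_im, zero_mul, sub_zero] at h
    simpa [Matrix.mulVec, dotProduct, ha, hb, Pi.sub_apply, Pi.smul_apply,
      smul_eq_mul] using h
  have hIm : M *ᵥ b = μ.im • a + μ.re • b := by
    funext j
    have h := congrArg Complex.im (hmain j)
    rw [Complex.im_sum] at h
    simp only [Complex.mul_im, Complex.ofReal_re, Complex.ofReal_im, zero_mul, add_zero] at h
    have h' : ∑ k, M j k * b k = μ.re * b j + μ.im * a j := by
      simpa [ha, hb] using h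
    simp [Matrix.mulVec, dotProduct, Pi.add_apply, Pi.smul_apply, smul_eq_mul, h']
    ring
  have hsum2 : (M *ᵥ a) ⬝ᵥ Pα *ᵥ (M *ᵥ a) + (M *ᵥ b) ⬝ᵥ Pα *ᵥ (M *ᵥ b)
      = (μ.re ^ 2 + μ.im ^ 2) * (a ⬝ᵥ Pα *ᵥ a + b ⬝ᵥ Pα *ᵥ b) := by
    rw [hRe, hIm]
    simp only [Matrix.mulVec_sub, Matrix.mulVec_add, Matrix.mulVec_smul, sub_dotProduct,
      dotProduct_sub, add_dotProduct, dotProduct_add, smul_dotProduct, dotProduct_smul,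
      smul_eq_mul]
    ring
  have hab : a ≠ 0 ∨ b ≠ 0 := by
    by_contra h
    push_neg at h
    apply hv
    funext j
    have h1 : a j = 0 := congrFun h.1 j
    have h2 : b j = 0 := congrFun h.2 j
    rw [ha] at h1
    rw [hb] at h2
    exact Complex.ext (by simpa using h1) (by simpa using h2)
  have hT : 0 < a ⬝ᵥ Pα *ᵥ a + b ⬝ᵥ Pα *ᵥ b := by
    rcases hab with h | h
    · exact add_pos_of_pos_of_nonneg (hPαpos a h) (hPαnonneg b)
    · exact add_pos_of_nonneg_of_pos (hPαnonneg a) (hPαpos b h)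
  have hlt : (M *ᵥ a) ⬝ᵥ Pα *ᵥ (M *ᵥ a) + (M *ᵥ b) ⬝ᵥ Pα *ᵥ (M *ᵥ b)
      < a ⬝ᵥ Pα *ᵥ a + b ⬝ᵥ Pα *ᵥ b := by
    rcases hab with h | h
    · exact add_lt_add_of_lt_of_le (hLyap a h) (hLyapLe b)
    · exact add_lt_add_of_le_of_lt (hLyapLe a) (hLyap b h)
  rw [hsum2] at hlt
  have hmod : μ.re ^ 2 + μ.im ^ 2 < 1 := by
    nlinarith
  have habs2 : ‖μ‖ ^ 2 < 1 := by
    rw [Complex.sq_norm, Complex.normSq_apply]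
    nlinarith
  simpa using habs2
end
end

section
/- Let A ∈ ℝ^{n×n}, B ∈ ℝ^{n×m}, x_0 ∈ ℝⁿ, and let (x_t) be the DGR closed-loop trajectory with α = 0. Set Ã = Π_{R(B)⊥} A and B̃ = Π_{R(B)} A. Define z_0 = x_0, z_t = x_t − Π_{V_t} x_t for t ≥ 1, and let z̄_t = z_t/‖z_t‖ if z_t ≠ 0 and z̄_t = 0 otherwise. Define a_t = ‖Ã^t A z̄_0‖ and b_{t,r} = ‖Ã^{t−r} B̃ z̄_r‖ for 1 ≤ r ≤ t, and define L_1 = ‖A z̄_0‖ and L_{t+1} = a_t + Σ_{r=1}^{t} b_{t,r} L_r for t ≥ 1. Then for all t ≥ 0, ‖x_{t+1}‖ ≤ L_{t+1} ‖x_0‖. -/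
open Matrix

noncomputable section

lemma eucNorm_eq_norm {n : ℕ} (x : Fin n → ℝ) :
    eucNorm x = ‖(WithLp.equiv 2 (Fin n → ℝ)).symm x‖ := by
  rw [EuclideanSpace.norm_eq]
  simp [eucNorm, Real.norm_eq_abs, sq_abs]

lemma eucNorm_add_le {n : ℕ} (x y : Fin n → ℝ) :
    eucNorm (x + y) ≤ eucNorm x + eucNorm y := by
  rw [eucNorm_eq_norm, eucNorm_eq_norm, eucNorm_eq_norm]
  simp only [WithLp.equiv_symm_apply, WithLp.toLp_add]
  exact norm_add_le _ _

lemma eucNorm_sum_le {n : ℕ} (s : Finset ℕ) (f : ℕ → Fin n → ℝ) :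
    eucNorm (∑ r ∈ s, f r) ≤ ∑ r ∈ s, eucNorm (f r) := by
  rw [eucNorm_eq_norm]
  rw [show (WithLp.equiv 2 (Fin n → ℝ)).symm (∑ r ∈ s, f r)
      = ∑ r ∈ s, (WithLp.equiv 2 (Fin n → ℝ)).symm (f r) from
    map_sum (WithLp.linearEquiv 2 ℝ (Fin n → ℝ)).symm f s]
  refine (norm_sum_le _ _).trans ?_
  exact le_of_eq (by simp [eucNorm_eq_norm])

lemma eucNorm_eq_sqrt_dot {n : ℕ} (x : Fin n → ℝ) :
    eucNorm x = Real.sqrt (x ⬝ᵥ x) := by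
  simp [eucNorm, dotProduct, sq]

lemma proj_contract {n : ℕ} {P : Matrix (Fin n) (Fin n) ℝ} (hs : P.IsSymm)
    (hi : P * P = P) (y : Fin n → ℝ) :
    eucNorm (y - P.mulVec y) ≤ eucNorm y := by
  rw [eucNorm_eq_sqrt_dot, eucNorm_eq_sqrt_dot]
  apply Real.sqrt_le_sqrt
  set p := P.mulVec y with hp
  have h1 : p ⬝ᵥ p = p ⬝ᵥ y := by
    conv_lhs => rw [hp, dotProduct_mulVec]
    congr 1
    rw [show P.vecMul p = Pᵀ.mulVec p from (Matrix.mulVec_transpose P p).symm,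
      hs.eq, hp, Matrix.mulVec_mulVec, hi]
  have h2 : y ⬝ᵥ p = p ⬝ᵥ p := by rw [dotProduct_comm, h1]
  have h3 : (y - p) ⬝ᵥ (y - p) = y ⬝ᵥ y - p ⬝ᵥ p := by
    rw [sub_dotProduct, dotProduct_sub, dotProduct_sub, h2, ← h1]
    ring
  have h4 : 0 ≤ p ⬝ᵥ p := Finset.sum_nonneg fun i _ => mul_self_nonneg _
  linarith

lemma eucNorm_mulVec_normalize {n : ℕ} (M : Matrix (Fin n) (Fin n) ℝ) (v : Fin n → ℝ) :
    eucNorm (M.mulVec v)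
      = eucNorm v * eucNorm (M.mulVec (if v = 0 then 0 else (eucNorm v)⁻¹ • v)) := by
  by_cases h : v = 0
  · simp [h, eucNorm, Real.sqrt_eq_zero']
  · rw [if_neg h, Matrix.mulVec_smul]
    have hc : eucNorm v ≠ 0 := by
      simp only [eucNorm, ne_eq]
      intro hc
      apply h
      have := (Real.sqrt_eq_zero (Finset.sum_nonneg fun i _ => sq_nonneg _)).mp hc
      funext i
      have := (Finset.sum_eq_zero_iff_of_nonneg (fun i _ => sq_nonneg (v i))).mp this i
        (Finset.mem_univ i)
      exact pow_eq_zero_iff (by norm_num) |>.mp this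
    have hpos : 0 ≤ eucNorm v := Real.sqrt_nonneg _
    rw [show eucNorm ((eucNorm v)⁻¹ • M.mulVec v)
        = |(eucNorm v)⁻¹| * eucNorm (M.mulVec v) from ?_]
    · rw [abs_inv, abs_of_nonneg hpos]
      field_simp
    · simp only [eucNorm, Pi.smul_apply, smul_eq_mul, mul_pow]
      rw [← Finset.mul_sum, Real.sqrt_mul (sq_nonneg _), Real.sqrt_sq_eq_abs]

/-- Recursive upper bound on the DGR state trajectory. -/
theorem stmt10 {n m : ℕ} (A : Matrix (Fin n) (Fin n) ℝ) (B : Matrix (Fin n) (Fin m) ℝ)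
    (PB : Matrix (Fin n) (Fin n) ℝ)
    (hPB : IsProjMatrix PB (LinearMap.range B.mulVecLin))
    (x : ℕ → Fin n → ℝ)
    (Pv : ℕ → Matrix (Fin n) (Fin n) ℝ)
    (hPv : ∀ t, IsProjMatrix (Pv t)
      (Submodule.span ℝ (Set.range fun i : Fin t => x i.val)))
    (hdyn : ∀ t, x (t + 1) = A.mulVec (x t) - (PB * A).mulVec ((Pv t).mulVec (x t)))
    (z : ℕ → Fin n → ℝ) (hz0 : z 0 = x 0)
    (hz : ∀ t, 1 ≤ t → z t = x t - (Pv t).mulVec (x t))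
    (zbar : ℕ → Fin n → ℝ)
    (hzbar : ∀ t, zbar t = if z t = 0 then 0 else (eucNorm (z t))⁻¹ • z t)
    (a : ℕ → ℝ)
    (ha : ∀ t, a t = eucNorm ((((1 - PB) * A) ^ t * A).mulVec (zbar 0)))
    (b : ℕ → ℕ → ℝ)
    (hb : ∀ t r, 1 ≤ r → r ≤ t →
      b t r = eucNorm ((((1 - PB) * A) ^ (t - r) * (PB * A)).mulVec (zbar r)))
    (L : ℕ → ℝ)
    (hL1 : L 1 = eucNorm (A.mulVec (zbar 0)))
    (hL : ∀ t, 1 ≤ t → L (t + 1) = a t + ∑ r ∈ Finset.Icc 1 t, b t r * L r) :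
    ∀ t, eucNorm (x (t + 1)) ≤ L (t + 1) * eucNorm (x 0) := by
  set At := (1 - PB) * A with hAt
  set Bt := PB * A with hBt
  -- x 1 = A x 0
  have hx1 : x 1 = A.mulVec (x 0) := by
    have h0 : (Pv 0).mulVec (x 0) = 0 := by
      have hr := (hPv 0).2.2
      rw [Set.range_eq_empty, Submodule.span_empty] at hr
      have h := LinearMap.range_eq_bot.mp hr
      simpa [Matrix.mulVecLin_apply] using DFunLike.congr_fun h (x 0)
    rw [hdyn 0, h0, Matrix.mulVec_zero, sub_zero]
  -- the one-step recursion for t ≥ 1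
  have hstep : ∀ t, 1 ≤ t → x (t + 1) = At.mulVec (x t) + Bt.mulVec (z t) := by
    intro t ht
    rw [hdyn t, hz t ht, hAt, hBt, Matrix.sub_mul, one_mul, Matrix.sub_mulVec,
      Matrix.mulVec_sub]
    abel
  -- the unrolled form for t ≥ 1
  have hunroll : ∀ t, 1 ≤ t → x (t + 1)
      = (At ^ t * A).mulVec (x 0)
        + ∑ r ∈ Finset.Icc 1 t, (At ^ (t - r) * Bt).mulVec (z r) := by
    intro t ht
    induction t, ht using Nat.le_induction with
    | base =>
      rw [hstep 1 le_rfl, hx1, Matrix.mulVec_mulVec]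
      simp
    | succ t ht ih =>
      rw [hstep (t + 1) (by omega), ih]
      rw [Matrix.mulVec_add, Matrix.mulVec_mulVec, ← mul_assoc, ← pow_succ']
      have hsum : At.mulVec (∑ r ∈ Finset.Icc 1 t, (At ^ (t - r) * Bt).mulVec (z r))
          = ∑ r ∈ Finset.Icc 1 t, (At ^ (t + 1 - r) * Bt).mulVec (z r) := by
        have hmap := map_sum At.mulVecLin
          (fun r => (At ^ (t - r) * Bt).mulVec (z r)) (Finset.Icc 1 t)
        simp only [Matrix.mulVecLin_apply] at hmap
        rw [hmap]
        refine Finset.sum_congr rfl fun r hr => ?_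
        obtain ⟨hr1, hr2⟩ := Finset.mem_Icc.mp hr
        rw [Matrix.mulVec_mulVec, ← mul_assoc, ← pow_succ',
          show t - r + 1 = t + 1 - r by omega]
      rw [hsum, Finset.sum_Icc_succ_top (by omega : 1 ≤ t + 1)]
      simp [add_assoc]
  -- main claim, by strong induction
  intro t
  induction t using Nat.strong_induction_on with
  | _ t IH =>
    rcases Nat.eq_zero_or_pos t with rfl | ht
    · rw [hx1, ← hz0, eucNorm_mulVec_normalize A (z 0), ← hzbar 0, hL1, hz0]
      exact le_of_eq (mul_comm _ _)
    · rw [hunroll t ht, hL t ht]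
      calc eucNorm ((At ^ t * A).mulVec (x 0)
              + ∑ r ∈ Finset.Icc 1 t, (At ^ (t - r) * Bt).mulVec (z r))
          ≤ eucNorm ((At ^ t * A).mulVec (x 0))
              + eucNorm (∑ r ∈ Finset.Icc 1 t, (At ^ (t - r) * Bt).mulVec (z r)) :=
            eucNorm_add_le _ _
        _ ≤ eucNorm ((At ^ t * A).mulVec (x 0))
              + ∑ r ∈ Finset.Icc 1 t, eucNorm ((At ^ (t - r) * Bt).mulVec (z r)) := by
            gcongr
            exact eucNorm_sum_le _ _
        _ ≤ a t * eucNorm (x 0)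
              + ∑ r ∈ Finset.Icc 1 t, (b t r * L r) * eucNorm (x 0) := by
            gcongr with r hr
            · -- first term
              rw [← hz0, eucNorm_mulVec_normalize (At ^ t * A) (z 0), ← hzbar 0, hz0,
                ha t]
              exact le_of_eq (mul_comm _ _)
            · -- summand terms
              obtain ⟨hr1, hr2⟩ := Finset.mem_Icc.mp hr
              rw [eucNorm_mulVec_normalize (At ^ (t - r) * Bt) (z r), ← hzbar r]
              have hbnn : 0 ≤ b t r := by
                rw [hb t r hr1 hr2]; exact eucNorm_nonneg _
              have hzr : eucNorm (z r) ≤ L r * eucNorm (x 0) := by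
                have h1 : eucNorm (z r) ≤ eucNorm (x r) := by
                  rw [hz r hr1]
                  exact proj_contract (hPv r).1 (hPv r).2.1 (x r)
                obtain ⟨s, rfl⟩ := Nat.exists_eq_add_of_le' hr1
                exact h1.trans (IH s (by omega))
              calc eucNorm (z r) * eucNorm ((At ^ (t - r) * Bt).mulVec (zbar r))
                  = eucNorm (z r) * b t r := by rw [hb t r hr1 hr2]
                _ ≤ (L r * eucNorm (x 0)) * b t r := by
                    exact mul_le_mul_of_nonneg_right hzr hbnn
                _ = (b t r * L r) * eucNorm (x 0) := by ring
        _ = (a t + ∑ r ∈ Finset.Icc 1 t, b t r * L r) * eucNorm (x 0) := by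
            rw [add_mul, Finset.sum_mul]
end
end

section
/- Let A ∈ ℝ^{n×n}, B ∈ ℝ^{n×m}, and suppose there are k_1 + k_2 distinct complex numbers λ_1, …, λ_{k_1+k_2} and nonzero vectors u_1, …, u_{k_1+k_2} ∈ ℂⁿ with A u_ℓ = λ_ℓ u_ℓ for each ℓ (A viewed as a complex matrix), such that u_ℓ lies in the complexified column space of B for ℓ = 1, …, k_1 and u_ℓ lies in the complexification of R(B)^⊥ (i.e., B^⊤ u_ℓ = 0) for ℓ = k_1+1, …, k_1+k_2. Suppose x_0 ∈ ℝⁿ satisfies x_0 = Σ_{ℓ=1}^{k_1+k_2} β_ℓ u_ℓ with all β_ℓ ∈ ℂ nonzero. Let (x_t) be the DGR closed-loop trajectory with α = 0 started at x_0. Then for every r ≤ max{k_1, k_2}, the vectors x_0, x_1, …, x_{r−1} are linearly independent. -/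
open Matrix

noncomputable section

section AuxDGR

variable {E : Type*} [AddCommGroup E] [Module ℂ E]

private lemma dgr_isolate {ι : Type*} [DecidableEq ι]
    (M : Submodule ℂ E) (f : E →ₗ[ℂ] E) (hf : ∀ w ∈ M, f w ∈ M)
    (lam : ι → ℂ) (u : ι → E) (heig : ∀ i, f (u i) = lam i • u i)
    (hlam : Function.Injective lam) :
    ∀ (I : Finset ι) (c : ι → ℂ), (∑ i ∈ I, c i • u i) ∈ M → ∀ i ∈ I, c i • u i ∈ M := by
  intro I
  induction I using Finset.induction_on with
  | empty => intro c _ i hi; simp at hi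
  | @insert a J ha IH =>
    intro c hz
    have hz2 : (∑ i ∈ J, (c i * (lam i - lam a)) • u i) ∈ M := by
      have h1 : f (∑ i ∈ insert a J, c i • u i) - lam a • (∑ i ∈ insert a J, c i • u i)
          = ∑ i ∈ insert a J, (c i * (lam i - lam a)) • u i := by
        rw [map_sum, Finset.smul_sum, ← Finset.sum_sub_distrib]
        refine Finset.sum_congr rfl fun i _ => ?_
        rw [f.map_smul, heig i, smul_smul, smul_smul, ← sub_smul]
        congr 1; ring
      have h2 : ∑ i ∈ insert a J, (c i * (lam i - lam a)) • u i
          = ∑ i ∈ J, (c i * (lam i - lam a)) • u i := by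
        rw [Finset.sum_insert ha]; simp
      rw [← h2, ← h1]
      exact M.sub_mem (hf _ hz) (M.smul_mem _ hz)
    have hJ : ∀ i ∈ J, c i • u i ∈ M := by
      intro i hi
      have hne : lam i - lam a ≠ 0 :=
        sub_ne_zero.mpr (fun h => ha ((hlam h) ▸ hi))
      have hmem := IH _ hz2 i hi
      have h3 : c i • u i = (lam i - lam a)⁻¹ • ((c i * (lam i - lam a)) • u i) := by
        rw [smul_smul]; congr 1; field_simp
      rw [h3]; exact M.smul_mem _ hmem
    intro i hi
    rcases Finset.mem_insert.mp hi with rfl | hi'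
    · have h4 : c i • u i = (∑ j ∈ insert i J, c j • u j) - ∑ j ∈ J, c j • u j := by
        rw [Finset.sum_insert ha]; exact (add_sub_cancel_right _ _).symm
      rw [h4]; exact M.sub_mem hz (Submodule.sum_mem _ fun j hj => hJ j hj)
    · exact hJ i hi'

private lemma dgr_mono (y : ℕ → E) (t : ℕ) :
    Submodule.span ℂ (Set.range fun i : Fin t => y i)
      ≤ Submodule.span ℂ (Set.range fun i : Fin (t + 1) => y i) := by
  apply Submodule.span_mono
  rintro _ ⟨i, rfl⟩
  exact ⟨i.castSucc, rfl⟩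

private lemma dgr_step_invariance (f : E →ₗ[ℂ] E) (y : ℕ → E)
    (hstep : ∀ t, ∃ v ∈ Submodule.span ℂ (Set.range fun i : Fin t => y i),
      y (t + 1) = f (y t - v)) :
    ∀ t, ∀ w ∈ Submodule.span ℂ (Set.range fun i : Fin t => y i),
      f w ∈ Submodule.span ℂ (Set.range fun i : Fin (t + 1) => y i) := by
  intro t
  induction t with
  | zero =>
    intro w hw
    have he : (Set.range fun i : Fin 0 => y i) = ∅ := Set.range_eq_empty _
    rw [he, Submodule.span_empty, Submodule.mem_bot] at hw
    simp [hw]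
  | succ t IH =>
    intro w hw
    have hle : Submodule.span ℂ (Set.range fun i : Fin (t + 1) => y i)
        ≤ Submodule.comap f (Submodule.span ℂ (Set.range fun i : Fin (t + 2) => y i)) := by
      rw [Submodule.span_le]
      rintro _ ⟨i, rfl⟩
      simp only [SetLike.mem_coe, Submodule.mem_comap]
      rcases lt_or_eq_of_le (Nat.lt_succ_iff.mp i.isLt) with hi | hi
      · have hm : y (i : ℕ) ∈ Submodule.span ℂ (Set.range fun i : Fin t => y i) :=
          Submodule.subset_span ⟨⟨(i : ℕ), hi⟩, rfl⟩
        exact dgr_mono y (t + 1) (IH _ hm)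
      · obtain ⟨v, hv, hveq⟩ := hstep t
        have hfy : f (y (i : ℕ)) = y (t + 1) + f v := by
          rw [hi, hveq, map_sub]; abel
        rw [hfy]
        refine Submodule.add_mem _ (Submodule.subset_span ⟨⟨t + 1, by omega⟩, rfl⟩) ?_
        exact dgr_mono y (t + 1) (IH _ hv)
    exact hle hw

private lemma dgr_aux {n k : ℕ} (f : (Fin n → ℂ) →ₗ[ℂ] (Fin n → ℂ))
    (u : Fin k → Fin n → ℂ) (hu0 : ∀ j, u j ≠ 0)
    (lam : Fin k → ℂ) (hlam : Function.Injective lam)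
    (heig : ∀ j, f (u j) = lam j • u j)
    (β : Fin k → ℂ) (hβ : ∀ j, β j ≠ 0)
    (y : ℕ → Fin n → ℂ) (hy0 : y 0 = ∑ j, β j • u j)
    (hstep : ∀ t, ∃ v ∈ Submodule.span ℂ (Set.range fun i : Fin t => y i),
      y (t + 1) = f (y t - v))
    (s : ℕ) (hs : s < k)
    (hdep : y s ∈ Submodule.span ℂ (Set.range fun i : Fin s => y i)) : False := by
  classical
  set M : Submodule ℂ (Fin n → ℂ) := Submodule.span ℂ (Set.range fun i : Fin s => y i) with hM
  have hS1 : Submodule.span ℂ (Set.range fun i : Fin (s + 1) => y i) ≤ M := by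
    rw [Submodule.span_le]
    rintro _ ⟨i, rfl⟩
    rcases lt_or_eq_of_le (Nat.lt_succ_iff.mp i.isLt) with hi | hi
    · exact Submodule.subset_span ⟨⟨(i : ℕ), hi⟩, rfl⟩
    · show y (i:ℕ) ∈ (M : Set _)
      rw [hi]; exact hdep
  have hinv : ∀ w ∈ M, f w ∈ M := fun w hw => hS1 (dgr_step_invariance f y hstep s w hw)
  have hy0M : y 0 ∈ M := by
    cases s with
    | zero => exact hdep
    | succ s' => exact Submodule.subset_span ⟨⟨0, Nat.succ_pos _⟩, rfl⟩
  have hiso := dgr_isolate M f hinv lam u heig hlam Finset.univ β (by rw [← hy0]; exact hy0M)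
  have huM : ∀ j, u j ∈ M := by
    intro j
    have h1 := hiso j (Finset.mem_univ j)
    have h2 : u j = (β j)⁻¹ • (β j • u j) := by
      rw [smul_smul, inv_mul_cancel₀ (hβ j), one_smul]
    rw [h2]; exact M.smul_mem _ h1
  have hu_li : LinearIndependent ℂ u :=
    Module.End.eigenvectors_linearIndependent' f lam hlam u
      (fun j => ⟨Module.End.mem_eigenspace_iff.mpr (heig j), hu0 j⟩)
  have hlift : LinearIndependent ℂ (fun j : Fin k => (⟨u j, huM j⟩ : M)) := by
    apply LinearIndependent.of_comp M.subtype
    exact hu_li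
  have hcard : k ≤ Module.finrank ℂ M := by
    simpa using hlift.fintype_card_le_finrank
  have hrank : Module.finrank ℂ M ≤ s := by
    have h1 := finrank_span_le_card (R := ℂ) (Set.range fun i : Fin s => y i)
    rw [← hM] at h1
    refine h1.trans ?_
    rw [Set.toFinset_range]
    exact (Finset.card_image_le).trans (by simp)
  omega

end AuxDGR

/-- Informativity of the DGR-generated data: linear independence of the first
`max{k₁,k₂}` states when `x₀` excites `k₁` modes in `R(B)` and `k₂` modes in `R(B)⊥`
corresponding to distinct eigenvalues. -/
theorem stmt15 {n m : ℕ} (A : Matrix (Fin n) (Fin n) ℝ) (B : Matrix (Fin n) (Fin m) ℝ)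
    (PB : Matrix (Fin n) (Fin n) ℝ)
    (hPB : IsProjMatrix PB (LinearMap.range B.mulVecLin))
    (k1 k2 : ℕ) (lam : Fin (k1 + k2) → ℂ) (hlam : Function.Injective lam)
    (u : Fin (k1 + k2) → (Fin n → ℂ)) (hu0 : ∀ ℓ, u ℓ ≠ 0)
    (heig : ∀ ℓ, (A.map (algebraMap ℝ ℂ)).mulVec (u ℓ) = lam ℓ • u ℓ)
    (huB : ∀ ℓ : Fin (k1 + k2), (ℓ : ℕ) < k1 →
      ∃ w : Fin m → ℂ, u ℓ = (B.map (algebraMap ℝ ℂ)).mulVec w)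
    (huBperp : ∀ ℓ : Fin (k1 + k2), k1 ≤ (ℓ : ℕ) →
      (Bᵀ.map (algebraMap ℝ ℂ)).mulVec (u ℓ) = 0)
    (β : Fin (k1 + k2) → ℂ) (hβ : ∀ ℓ, β ℓ ≠ 0)
    (x : ℕ → Fin n → ℝ)
    (hx0 : (fun j => (x 0 j : ℂ)) = ∑ ℓ, β ℓ • u ℓ)
    (Pv : ℕ → Matrix (Fin n) (Fin n) ℝ)
    (hPv : ∀ t, IsProjMatrix (Pv t)
      (Submodule.span ℝ (Set.range fun i : Fin t => x i.val)))
    (hdyn : ∀ t, x (t + 1) = A.mulVec (x t) - (PB * A).mulVec ((Pv t).mulVec (x t))) :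
    ∀ r ≤ max k1 k2, LinearIndependent ℝ (fun i : Fin r => x i.val) := by
  classical
  -- complexified objects
  set Ac : Matrix (Fin n) (Fin n) ℂ := A.map (algebraMap ℝ ℂ) with hAc
  set PBc : Matrix (Fin n) (Fin n) ℂ := PB.map (algebraMap ℝ ℂ) with hPBc
  set f : (Fin n → ℂ) →ₗ[ℂ] (Fin n → ℂ) := Ac.mulVecLin with hf
  set ξ : ℕ → (Fin n → ℂ) := fun t j => ((x t j : ℝ) : ℂ) with hξ
  set z : ℕ → (Fin n → ℂ) := fun t j => ((((Pv t).mulVec (x t)) j : ℝ) : ℂ) with hz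
  -- basic cast lemma
  have hcastMV : ∀ {p q : ℕ} (M : Matrix (Fin p) (Fin q) ℝ) (v : Fin q → ℝ),
      (M.map (algebraMap ℝ ℂ)).mulVec (fun j => (v j : ℂ)) = fun i => ((M.mulVec v) i : ℂ) := by
    intro p q M v
    funext i
    simp only [Matrix.mulVec, dotProduct, Matrix.map_apply, algebraMap.coe_smul]
    push_cast
    rfl
  have hfeig : ∀ ℓ, f (u ℓ) = lam ℓ • u ℓ := by
    intro ℓ
    simpa [hf, Matrix.mulVecLin_apply] using heig ℓ
  -- complexified dynamics
  have hξdyn : ∀ t, ξ (t + 1) = f (ξ t) - PBc.mulVec (Ac.mulVec (z t)) := by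
    intro t
    have h1 : f (ξ t) = fun i => ((A.mulVec (x t)) i : ℂ) := hcastMV A (x t)
    have h2 : Ac.mulVec (z t) = fun i => ((A.mulVec ((Pv t).mulVec (x t))) i : ℂ) :=
      hcastMV A _
    have h3 : PBc.mulVec (Ac.mulVec (z t)) =
        fun i => (((PB * A).mulVec ((Pv t).mulVec (x t))) i : ℂ) := by
      rw [h2, hcastMV PB _]
      funext i
      rw [← Matrix.mulVec_mulVec]
    funext j
    have h4 := congrFun (hdyn t) j
    show ((x (t+1) j : ℝ) : ℂ) = (f (ξ t) - PBc.mulVec (Ac.mulVec (z t))) j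
    rw [h1, h3, h4]
    simp
  -- eigen independence and projections
  have hu_li : LinearIndependent ℂ u :=
    Module.End.eigenvectors_linearIndependent' f lam hlam u
      (fun ℓ => ⟨Module.End.mem_eigenspace_iff.mpr (hfeig ℓ), hu0 ℓ⟩)
  set W : Submodule ℂ (Fin n → ℂ) := Submodule.span ℂ (Set.range u) with hW
  have humem : ∀ ℓ, u ℓ ∈ W := fun ℓ => Submodule.subset_span ⟨ℓ, rfl⟩
  let b : Module.Basis (Fin (k1 + k2)) ℂ W := Module.Basis.span hu_li
  obtain ⟨W', hW'⟩ := Submodule.exists_isCompl W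
  set pr : (Fin n → ℂ) →ₗ[ℂ] W := W.linearProjOfIsCompl W' hW' with hpr
  set g1 : Fin (k1 + k2) → (Fin n → ℂ) := fun ℓ => if (ℓ : ℕ) < k1 then u ℓ else 0 with hg1
  set g2 : Fin (k1 + k2) → (Fin n → ℂ) := fun ℓ => if (ℓ : ℕ) < k1 then 0 else u ℓ with hg2
  set π1 : (Fin n → ℂ) →ₗ[ℂ] (Fin n → ℂ) := (b.constr ℂ g1).comp pr with hπ1
  set π2 : (Fin n → ℂ) →ₗ[ℂ] (Fin n → ℂ) := (b.constr ℂ g2).comp pr with hπ2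
  have hpru : ∀ ℓ, pr (u ℓ) = b ℓ := by
    intro ℓ
    have h1 : pr ((⟨u ℓ, humem ℓ⟩ : W) : (Fin n → ℂ)) = ⟨u ℓ, humem ℓ⟩ :=
      Submodule.linearProjOfIsCompl_apply_left hW' _
    have h2 : (⟨u ℓ, humem ℓ⟩ : W) = b ℓ := by
      apply Subtype.ext
      exact congrArg Subtype.val (Module.Basis.span_apply hu_li ℓ).symm
    rw [← h2]; exact h1
  have hπ1u : ∀ ℓ, π1 (u ℓ) = g1 ℓ := by
    intro ℓ
    show (b.constr ℂ g1) (pr (u ℓ)) = g1 ℓ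
    rw [hpru ℓ, Module.Basis.constr_basis]
  have hπ2u : ∀ ℓ, π2 (u ℓ) = g2 ℓ := by
    intro ℓ
    show (b.constr ℂ g2) (pr (u ℓ)) = g2 ℓ
    rw [hpru ℓ, Module.Basis.constr_basis]
  -- equalities of linear maps on W
  have heqOn : ∀ (Φ Ψ : (Fin n → ℂ) →ₗ[ℂ] (Fin n → ℂ)), (∀ ℓ, Φ (u ℓ) = Ψ (u ℓ)) →
      ∀ w ∈ W, Φ w = Ψ w := by
    intro Φ Ψ h w hw
    exact LinearMap.eqOn_span (fun v hv => by obtain ⟨ℓ, rfl⟩ := hv; exact h ℓ) hw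
  have hcomm1 : ∀ w ∈ W, π1 (f w) = f (π1 w) := by
    refine heqOn (π1.comp f) (f.comp π1) (fun ℓ => ?_)
    simp only [LinearMap.comp_apply]
    rw [hfeig ℓ, π1.map_smul, hπ1u ℓ]
    by_cases h : (ℓ : ℕ) < k1 <;> simp [hg1, h, hfeig ℓ]
  have hcomm2 : ∀ w ∈ W, π2 (f w) = f (π2 w) := by
    refine heqOn (π2.comp f) (f.comp π2) (fun ℓ => ?_)
    simp only [LinearMap.comp_apply]
    rw [hfeig ℓ, π2.map_smul, hπ2u ℓ]
    by_cases h : (ℓ : ℕ) < k1 <;> simp [hg2, h, hfeig ℓ]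
  have hππ1 : ∀ w ∈ W, π1 (π1 w) = π1 w := by
    refine heqOn (π1.comp π1) π1 (fun ℓ => ?_)
    simp only [LinearMap.comp_apply]
    rw [hπ1u ℓ]
    by_cases h : (ℓ : ℕ) < k1 <;> simp [hg1, h, hπ1u ℓ]
  have hπ21 : ∀ w ∈ W, π2 (π1 w) = 0 := by
    refine heqOn (π2.comp π1) 0 (fun ℓ => ?_)
    simp only [LinearMap.comp_apply, LinearMap.zero_apply]
    rw [hπ1u ℓ]
    by_cases h : (ℓ : ℕ) < k1 <;> simp [hg1, hg2, h, hπ2u ℓ]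

  -- PB matrix facts
  have hfix : ∀ v : Fin n → ℝ, (∃ c, B.mulVec c = v) → PB.mulVec v = v := by
    rintro v ⟨c, rfl⟩
    have hv : B.mulVec c ∈ LinearMap.range PB.mulVecLin := by
      rw [hPB.2.2]; exact ⟨c, rfl⟩
    obtain ⟨w, hw⟩ := hv
    have hw' : PB.mulVec w = B.mulVec c := hw
    calc PB.mulVec (B.mulVec c) = PB.mulVec (PB.mulVec w) := by rw [hw']
    _ = (PB * PB).mulVec w := Matrix.mulVec_mulVec w PB PB
    _ = PB.mulVec w := by rw [hPB.2.1]
    _ = B.mulVec c := hw'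
  have hPBB : PB * B = B := by
    ext i j
    have hm : B.mulVec (Pi.single j 1) = (fun q => B q j) := by
      funext q; simp
    have h5 := congrFun (hfix (fun q => B q j) ⟨Pi.single j 1, hm⟩) i
    simpa [Matrix.mul_apply, Matrix.mulVec, dotProduct] using h5
  have hBtPB : Bᵀ * PB = Bᵀ := by
    calc Bᵀ * PB = Bᵀ * PBᵀ := by rw [hPB.1]
    _ = (PB * B)ᵀ := (Matrix.transpose_mul PB B).symm
    _ = Bᵀ := by rw [hPBB]
  have hkill : ∀ v : Fin n → ℝ, Bᵀ.mulVec v = 0 → PB.mulVec v = 0 := by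
    intro v hv
    obtain ⟨c, hc⟩ : ∃ c, B.mulVec c = PB.mulVec v := by
      have hmem : PB.mulVec v ∈ LinearMap.range B.mulVecLin := by
        rw [← hPB.2.2]; exact ⟨v, rfl⟩
      obtain ⟨c, hc⟩ := hmem; exact ⟨c, hc⟩
    have hdot : (PB.mulVec v) ⬝ᵥ (PB.mulVec v) = 0 := by
      nth_rewrite 2 [← hc]
      rw [Matrix.dotProduct_mulVec, ← Matrix.mulVec_transpose,
        Matrix.mulVec_mulVec, hBtPB, hv]
      exact zero_dotProduct c
    funext i
    have h6 : ∀ j ∈ Finset.univ, (0:ℝ) ≤ PB.mulVec v j * PB.mulVec v j :=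
      fun j _ => mul_self_nonneg _
    have h7 := (Finset.sum_eq_zero_iff_of_nonneg h6).mp hdot i (Finset.mem_univ i)
    exact mul_self_eq_zero.mp h7
  -- complexified PB facts
  have hPBcB : PBc * (B.map (algebraMap ℝ ℂ)) = B.map (algebraMap ℝ ℂ) := by
    rw [hPBc, ← Matrix.map_mul, hPBB]
  have hPBu1 : ∀ ℓ : Fin (k1 + k2), (ℓ : ℕ) < k1 → PBc.mulVec (u ℓ) = u ℓ := by
    intro ℓ hℓ
    obtain ⟨w, hw⟩ := huB ℓ hℓ
    rw [hw, Matrix.mulVec_mulVec, hPBcB]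
  have hvdecomp : ∀ (v : Fin n → ℂ), v = (fun j => (((v j).re : ℝ) : ℂ))
      + Complex.I • (fun j => (((v j).im : ℝ) : ℂ)) := by
    intro v; funext j
    simp only [Pi.add_apply, Pi.smul_apply, smul_eq_mul]
    rw [mul_comm]
    exact (Complex.re_add_im (v j)).symm
  have hzero2 : ∀ {q : ℕ} (X Y : Fin q → ℝ),
      ((fun j => ((X j : ℝ) : ℂ)) + Complex.I • (fun j => ((Y j : ℝ) : ℂ)) = 0) →
      X = 0 ∧ Y = 0 := by
    intro q X Y h
    constructor <;> funext j <;> [skip; skip] <;> {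
      have h8 := congrFun h j
      simp only [Pi.add_apply, Pi.smul_apply, smul_eq_mul, Pi.zero_apply] at h8
      rw [Complex.ext_iff] at h8
      simp at h8
      first
      | exact h8.1
      | exact h8.2 }
  have hPBu2 : ∀ ℓ : Fin (k1 + k2), k1 ≤ (ℓ : ℕ) → PBc.mulVec (u ℓ) = 0 := by
    intro ℓ hℓ
    have hb := huBperp ℓ hℓ
    set ur : Fin n → ℝ := fun j => (u ℓ j).re with hur
    set ui : Fin n → ℝ := fun j => (u ℓ j).im with hui
    have hdec := hvdecomp (u ℓ)
    have hbt : (Bᵀ.map (algebraMap ℝ ℂ)).mulVec (u ℓ)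
        = (fun i => ((Bᵀ.mulVec ur) i : ℂ)) + Complex.I • (fun i => ((Bᵀ.mulVec ui) i : ℂ)) := by
      rw [hdec, Matrix.mulVec_add, Matrix.mulVec_smul, hcastMV Bᵀ ur, hcastMV Bᵀ ui]
    rw [hbt] at hb
    obtain ⟨hr0, hi0⟩ := hzero2 _ _ hb
    have hpr0 : PB.mulVec ur = 0 := hkill ur hr0
    have hpi0 : PB.mulVec ui = 0 := hkill ui hi0
    rw [hdec, Matrix.mulVec_add, Matrix.mulVec_smul, hcastMV PB ur, hcastMV PB ui,
      hpr0, hpi0]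
    funext i; simp
  -- correction identity on W
  have hcorr : ∀ w ∈ W, PBc.mulVec (Ac.mulVec w) = f (π1 w) := by
    have h9 : ∀ w ∈ W, (PBc * Ac).mulVecLin w = (f.comp π1) w := by
      refine heqOn ((PBc * Ac).mulVecLin) (f.comp π1) (fun ℓ => ?_)
      simp only [LinearMap.comp_apply, Matrix.mulVecLin_apply]
      rw [← Matrix.mulVec_mulVec]
      have h10 : Ac.mulVec (u ℓ) = lam ℓ • u ℓ := heig ℓ
      rw [h10, Matrix.mulVec_smul, hπ1u ℓ]
      by_cases h : (ℓ : ℕ) < k1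
      · simp only [hg1]; rw [if_pos h, hPBu1 ℓ h, hfeig ℓ]
      · simp only [hg1]; rw [if_neg h, hPBu2 ℓ (Nat.le_of_not_lt h)]
        simp
    intro w hw
    have := h9 w hw
    simpa [Matrix.mulVecLin_apply, ← Matrix.mulVec_mulVec] using this
  -- membership facts
  have hWf : ∀ w ∈ W, f w ∈ W := by
    intro w hw
    have hle : W ≤ Submodule.comap f W := by
      rw [hW, Submodule.span_le]
      rintro _ ⟨ℓ, rfl⟩
      simp only [SetLike.mem_coe, Submodule.mem_comap]
      rw [hfeig ℓ]
      exact W.smul_mem _ (humem ℓ)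
    exact hle hw
  have hπ1W : ∀ w ∈ W, π1 w ∈ W := by
    intro w hw
    have hle : W ≤ Submodule.comap π1 W := by
      rw [hW, Submodule.span_le]
      rintro _ ⟨ℓ, rfl⟩
      simp only [SetLike.mem_coe, Submodule.mem_comap]
      rw [hπ1u ℓ]
      by_cases h : (ℓ : ℕ) < k1 <;> simp [hg1, h, humem ℓ, W.zero_mem, Submodule.mem_span_of_mem (Set.mem_range_self ℓ)]
    exact hle hw
  -- the real span casts into the complex span
  have hcast_span : ∀ (t : ℕ) (v : Fin n → ℝ),
      v ∈ Submodule.span ℝ (Set.range fun i : Fin t => x i.val) →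
      (fun j => ((v j : ℝ) : ℂ)) ∈ Submodule.span ℂ (Set.range fun i : Fin t => ξ i) := by
    intro t v hv
    induction hv using Submodule.span_induction with
    | mem w hw =>
      obtain ⟨i, rfl⟩ := hw
      exact Submodule.subset_span ⟨i, rfl⟩
    | zero =>
      have : (fun j => (((0 : Fin n → ℝ) j : ℝ) : ℂ)) = 0 := by funext j; simp
      rw [this]; exact Submodule.zero_mem _
    | add a c ha hc iha ihc =>
      have : (fun j => (((a + c) j : ℝ) : ℂ))
          = (fun j => ((a j : ℝ) : ℂ)) + (fun j => ((c j : ℝ) : ℂ)) := by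
        funext j; push_cast; simp
      rw [this]; exact Submodule.add_mem _ iha ihc
    | smul r v hv ihv =>
      have : (fun j => (((r • v) j : ℝ) : ℂ)) = (r : ℂ) • (fun j => ((v j : ℝ) : ℂ)) := by
        funext j; simp [Complex.real_smul]
      rw [this]; exact Submodule.smul_mem _ _ ihv
  have hzspan : ∀ t, z t ∈ Submodule.span ℂ (Set.range fun i : Fin t => ξ i) := by
    intro t
    apply hcast_span t
    rw [← (hPv t).2.2]
    exact ⟨x t, rfl⟩
  -- trajectory stays in W
  have hξW : ∀ t, ξ t ∈ W := by
    intro t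
    induction t using Nat.strong_induction_on with
    | _ t ih =>
      match t with
      | 0 =>
        have : ξ 0 = ∑ ℓ, β ℓ • u ℓ := hx0
        rw [this]
        exact Submodule.sum_mem _ fun ℓ _ => W.smul_mem _ (humem ℓ)
      | Nat.succ t =>
        have hsle : Submodule.span ℂ (Set.range fun i : Fin t => ξ i) ≤ W := by
          rw [Submodule.span_le]
          rintro _ ⟨i, rfl⟩
          exact ih i (by omega)
        have hzW : z t ∈ W := hsle (hzspan t)
        rw [hξdyn t]
        refine W.sub_mem (hWf _ (ih t (Nat.lt_succ_self t))) ?_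
        rw [hcorr _ hzW]
        exact hWf _ (hπ1W _ hzW)
  have hsleW : ∀ t, Submodule.span ℂ (Set.range fun i : Fin t => ξ i) ≤ W := by
    intro t
    rw [Submodule.span_le]
    rintro _ ⟨i, rfl⟩
    exact hξW i

  -- projected trajectories
  set y1 : ℕ → (Fin n → ℂ) := fun t => π1 (ξ t) with hy1
  set y2 : ℕ → (Fin n → ℂ) := fun t => π2 (ξ t) with hy2
  have hmapspan : ∀ (π : (Fin n → ℂ) →ₗ[ℂ] (Fin n → ℂ)) (t : ℕ) (w : Fin n → ℂ),
      w ∈ Submodule.span ℂ (Set.range fun i : Fin t => ξ i) →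
      π w ∈ Submodule.span ℂ (Set.range fun i : Fin t => π (ξ i)) := by
    intro π t w hw
    induction hw using Submodule.span_induction with
    | mem v hv =>
      obtain ⟨i, rfl⟩ := hv
      exact Submodule.subset_span ⟨i, rfl⟩
    | zero => rw [map_zero]; exact Submodule.zero_mem _
    | add a c ha hc iha ihc => rw [map_add]; exact Submodule.add_mem _ iha ihc
    | smul r v hv ihv => rw [π.map_smul]; exact Submodule.smul_mem _ _ ihv
  have hstep1 : ∀ t, ∃ v ∈ Submodule.span ℂ (Set.range fun i : Fin t => y1 i),
      y1 (t + 1) = f (y1 t - v) := by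
    intro t
    have hzW : z t ∈ W := hsleW t (hzspan t)
    refine ⟨π1 (z t), hmapspan π1 t _ (hzspan t), ?_⟩
    show π1 (ξ (t + 1)) = f (π1 (ξ t) - π1 (z t))
    rw [hξdyn t, map_sub, hcorr _ hzW, hcomm1 _ (hξW t), hcomm1 _ (hπ1W _ hzW),
      hππ1 _ hzW, map_sub]
  have hstep2 : ∀ t, ∃ v ∈ Submodule.span ℂ (Set.range fun i : Fin t => y2 i),
      y2 (t + 1) = f (y2 t - v) := by
    intro t
    have hzW : z t ∈ W := hsleW t (hzspan t)
    refine ⟨0, Submodule.zero_mem _, ?_⟩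
    show π2 (ξ (t + 1)) = f (π2 (ξ t) - 0)
    rw [hξdyn t, map_sub, hcorr _ hzW, hcomm2 _ (hξW t), hcomm2 _ (hπ1W _ hzW),
      hπ21 _ hzW, map_zero, sub_zero, sub_zero]
  -- initial values of the projected trajectories
  have hξ0sum : ξ 0 = ∑ ℓ, β ℓ • u ℓ := hx0
  have hy10 : y1 0 = ∑ j : Fin k1, β (Fin.castAdd k2 j) • u (Fin.castAdd k2 j) := by
    show π1 (ξ 0) = _
    rw [hξ0sum, map_sum]
    have hterm : ∀ ℓ : Fin (k1 + k2), π1 (β ℓ • u ℓ)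
        = if (ℓ : ℕ) < k1 then β ℓ • u ℓ else 0 := by
      intro ℓ
      rw [π1.map_smul, hπ1u ℓ]
      by_cases h : (ℓ : ℕ) < k1 <;> simp [hg1, h]
    rw [Finset.sum_congr rfl (fun ℓ _ => hterm ℓ)]
    rw [Fin.sum_univ_add]
    have hA : ∀ j : Fin k1, (if ((Fin.castAdd k2 j : Fin (k1 + k2)) : ℕ) < k1
        then β (Fin.castAdd k2 j) • u (Fin.castAdd k2 j) else 0)
        = β (Fin.castAdd k2 j) • u (Fin.castAdd k2 j) := by
      intro j; rw [if_pos]; simpa using j.isLt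
    have hB : ∀ j : Fin k2, (if ((Fin.natAdd k1 j : Fin (k1 + k2)) : ℕ) < k1
        then β (Fin.natAdd k1 j) • u (Fin.natAdd k1 j) else 0) = 0 := by
      intro j; rw [if_neg]; simp
    rw [Finset.sum_congr rfl (fun j _ => hA j), Finset.sum_congr rfl (fun j _ => hB j)]
    simp
  have hy20 : y2 0 = ∑ j : Fin k2, β (Fin.natAdd k1 j) • u (Fin.natAdd k1 j) := by
    show π2 (ξ 0) = _
    rw [hξ0sum, map_sum]
    have hterm : ∀ ℓ : Fin (k1 + k2), π2 (β ℓ • u ℓ)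
        = if (ℓ : ℕ) < k1 then 0 else β ℓ • u ℓ := by
      intro ℓ
      rw [π2.map_smul, hπ2u ℓ]
      by_cases h : (ℓ : ℕ) < k1 <;> simp [hg2, h]
    rw [Finset.sum_congr rfl (fun ℓ _ => hterm ℓ)]
    rw [Fin.sum_univ_add]
    have hA : ∀ j : Fin k1, (if ((Fin.castAdd k2 j : Fin (k1 + k2)) : ℕ) < k1
        then (0 : Fin n → ℂ) else β (Fin.castAdd k2 j) • u (Fin.castAdd k2 j)) = 0 := by
      intro j; rw [if_pos]; simpa using j.isLt
    have hB : ∀ j : Fin k2, (if ((Fin.natAdd k1 j : Fin (k1 + k2)) : ℕ) < k1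
        then (0 : Fin n → ℂ) else β (Fin.natAdd k1 j) • u (Fin.natAdd k1 j))
        = β (Fin.natAdd k1 j) • u (Fin.natAdd k1 j) := by
      intro j; rw [if_neg]; simp
    rw [Finset.sum_congr rfl (fun j _ => hA j), Finset.sum_congr rfl (fun j _ => hB j)]
    simp
  -- key: no early linear dependence
  have hnatAdd_inj : Function.Injective (Fin.natAdd k1 : Fin k2 → Fin (k1 + k2)) := by
    intro a c h
    have := congrArg (Fin.val) h
    simp only [Fin.coe_natAdd] at this
    exact Fin.ext (by omega)
  have hKEY : ∀ s, s < max k1 k2 →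
      x s ∉ Submodule.span ℝ (Set.range fun i : Fin s => x i.val) := by
    intro s hsmax hmem
    have hξdep : ξ s ∈ Submodule.span ℂ (Set.range fun i : Fin s => ξ i) :=
      hcast_span s (x s) hmem
    rcases lt_max_iff.mp hsmax with hs | hs
    · exact dgr_aux f (fun j : Fin k1 => u (Fin.castAdd k2 j)) (fun j => hu0 _)
        (fun j => lam (Fin.castAdd k2 j)) (hlam.comp (Fin.castAdd_injective k1 k2))
        (fun j => hfeig _) (fun j => β (Fin.castAdd k2 j)) (fun j => hβ _)
        y1 hy10 hstep1 s hs (hmapspan π1 s _ hξdep)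
    · exact dgr_aux f (fun j : Fin k2 => u (Fin.natAdd k1 j)) (fun j => hu0 _)
        (fun j => lam (Fin.natAdd k1 j)) (hlam.comp hnatAdd_inj)
        (fun j => hfeig _) (fun j => β (Fin.natAdd k1 j)) (fun j => hβ _)
        y2 hy20 hstep2 s hs (hmapspan π2 s _ hξdep)
  -- conclude by induction on the prefix length
  intro r
  induction r with
  | zero =>
    intro _
    exact linearIndependent_empty_type
  | succ r IH =>
    intro hr
    have hr' : r < max k1 k2 := Nat.lt_of_lt_of_le (Nat.lt_succ_self r) hr
    have hIH := IH (le_of_lt hr')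
    have hsnoc : (fun i : Fin (r + 1) => x i.val)
        = Fin.snoc (fun i : Fin r => x i.val) (x r) := by
      funext i
      refine Fin.lastCases ?_ (fun j => ?_) i
      · simp
      · simp
    rw [hsnoc, linearIndependent_fin_snoc]
    exact ⟨hIH, hKEY r hr'⟩
end
end

section
/- Let A ∈ ℝ^{n×n} be diagonalizable over ℂ with the column space of A contained in the column space of B ∈ ℝ^{n×m}. Suppose x_0 = Σ_{ℓ=1}^{k} β_ℓ u_ℓ where u_1, …, u_k ∈ ℂⁿ are eigenvectors of A with eigenvalues λ_1, …, λ_k and all β_ℓ ∈ ℂ are nonzero, and the u_ℓ are linearly independent. Let (x_t) be the DGR closed-loop trajectory with α = 0 started at x_0, and let r ≤ k be such that at least r of the eigenvalues λ_1, …, λ_k are pairwise distinct (i.e., the set {λ_1, …, λ_k} has at least r elements). Then x_0, x_1, …, x_{r−1} are linearly independent. -/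
open Matrix

noncomputable section

open Polynomial in
theorem dgr_krylov_aux {n k r : ℕ} (A : Matrix (Fin n) (Fin n) ℝ)
    (lam : Fin k → ℂ) (u : Fin k → (Fin n → ℂ))
    (hu : LinearIndependent ℂ u)
    (heig : ∀ ℓ, (A.map (algebraMap ℝ ℂ)).mulVec (u ℓ) = lam ℓ • u ℓ)
    (β : Fin k → ℂ) (hβ : ∀ ℓ, β ℓ ≠ 0)
    (x0 : Fin n → ℝ)
    (hx0 : (fun j => (x0 j : ℂ)) = ∑ ℓ, β ℓ • u ℓ)
    (hcard : r ≤ (Set.range lam).ncard) :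
    ∀ t, t < r → (A ^ t).mulVec x0 ∉
      Submodule.span ℝ (Set.range fun i : Fin t => (A ^ (i : ℕ)).mulVec x0) := by
  classical
  set A' : Matrix (Fin n) (Fin n) ℂ := A.map (algebraMap ℝ ℂ) with hA'
  set v : ℕ → Fin n → ℝ := fun j => (A ^ j).mulVec x0 with hv
  have hC : ∀ y : Fin n → ℝ, (fun i => ((A.mulVec y) i : ℂ)) = A'.mulVec (fun i => (y i : ℂ)) := by
    intro y; funext i; exact RingHom.map_mulVec (algebraMap ℝ ℂ) A y i
  have hvs : ∀ j, v (j + 1) = A.mulVec (v j) := by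
    intro j; rw [hv]; simp only [pow_succ']; rw [← mulVec_mulVec]
  have hCv : ∀ j, (fun i => ((v j) i : ℂ)) = ∑ ℓ, (β ℓ * lam ℓ ^ j) • u ℓ := by
    intro j; induction j with
    | zero =>
      have : v 0 = x0 := by rw [hv]; simp
      rw [this, hx0]
      simp
    | succ j ih =>
      have h1 : (fun i => ((v (j+1)) i : ℂ)) = A'.mulVec (fun i => ((v j) i : ℂ)) := by
        rw [hvs]; exact hC (v j)
      rw [h1, ih]
      have h2 : A'.mulVec (∑ ℓ, (β ℓ * lam ℓ ^ j) • u ℓ)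
          = ∑ ℓ, (β ℓ * lam ℓ ^ j) • (A'.mulVec (u ℓ)) := by
        simp only [← Matrix.mulVecLin_apply, map_sum, LinearMap.map_smul]
      rw [h2]
      refine Finset.sum_congr rfl fun ℓ _ => ?_
      rw [heig ℓ, smul_smul]
      congr 1
      rw [pow_succ]; ring
  intro t htr hmem
  obtain ⟨c, hc⟩ := (Submodule.mem_span_range_iff_exists_fun ℝ).1 hmem
  have hc' : ∑ i : Fin t, c i • v (i : ℕ) = v t := hc
  have h1 : (fun i => ((v t) i : ℂ)) = ∑ j : Fin t, (c j : ℂ) • (fun i => ((v (j : ℕ)) i : ℂ)) := by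
    rw [← hc']; funext i
    simp only [Finset.sum_apply, Pi.smul_apply, smul_eq_mul]
    push_cast
    rfl
  have h4 : ∀ ℓ, lam ℓ ^ t = ∑ j : Fin t, (c j : ℂ) * lam ℓ ^ (j : ℕ) := by
    have e1 : ∑ ℓ, (β ℓ * lam ℓ ^ t) • u ℓ
        = ∑ ℓ, (β ℓ * ∑ j : Fin t, (c j : ℂ) * lam ℓ ^ (j : ℕ)) • u ℓ := by
      calc ∑ ℓ, (β ℓ * lam ℓ ^ t) • u ℓ = (fun i => ((v t) i : ℂ)) := (hCv t).symm
        _ = ∑ j : Fin t, (c j : ℂ) • (fun i => ((v (j : ℕ)) i : ℂ)) := h1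
        _ = ∑ j : Fin t, (c j : ℂ) • ∑ ℓ, (β ℓ * lam ℓ ^ (j : ℕ)) • u ℓ := by
            refine Finset.sum_congr rfl fun j _ => by rw [hCv]
        _ = ∑ ℓ, (β ℓ * ∑ j : Fin t, (c j : ℂ) * lam ℓ ^ (j : ℕ)) • u ℓ := by
            simp only [Finset.smul_sum, smul_smul, Finset.mul_sum, Finset.sum_smul]
            rw [Finset.sum_comm]
            refine Finset.sum_congr rfl fun ℓ _ => Finset.sum_congr rfl fun j _ => ?_
            congr 1
            ring
    have hz : ∑ ℓ, (β ℓ * (lam ℓ ^ t - ∑ j : Fin t, (c j : ℂ) * lam ℓ ^ (j : ℕ))) • u ℓ = 0 := by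
      simp only [mul_sub, sub_smul]
      rw [Finset.sum_sub_distrib, e1, sub_self]
    intro ℓ
    have h3 := Fintype.linearIndependent_iff.1 hu _ hz ℓ
    rcases mul_eq_zero.1 h3 with h | h
    · exact absurd h (hβ ℓ)
    · exact sub_eq_zero.1 h
  -- polynomial contradiction
  set p : Polynomial ℂ := X ^ t - ∑ j : Fin t, C (c j : ℂ) * X ^ (j : ℕ) with hp
  have hp0 : p ≠ 0 := by
    intro h
    have : p.coeff t = 1 := by
      rw [hp, coeff_sub, coeff_X_pow, finset_sum_coeff]
      simp only [coeff_C_mul, coeff_X_pow]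
      have : ∀ j : Fin t, (c j : ℂ) * (if t = (j:ℕ) then 1 else 0) = 0 := fun j => by
        rw [if_neg (Nat.ne_of_gt j.isLt), mul_zero]
      rw [Finset.sum_eq_zero fun j _ => this j]
      simp
    rw [h] at this; simp at this
  have hdeg : p.natDegree ≤ t := by
    refine (natDegree_sub_le _ _).trans (max_le (natDegree_X_pow_le t) ?_)
    refine natDegree_sum_le_of_forall_le _ _ fun j _ => ?_
    exact (natDegree_C_mul_le _ _).trans ((natDegree_X_pow_le _).trans j.isLt.le)
  have hroot : ∀ ℓ, p.eval (lam ℓ) = 0 := by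
    intro ℓ
    simp [hp, eval_finset_sum, h4 ℓ]
  have hsub : Set.range lam ⊆ (p.roots.toFinset : Set ℂ) := by
    rintro μ ⟨ℓ, rfl⟩
    simp only [Finset.coe_sort_coe, Multiset.mem_toFinset, Finset.mem_coe]
    exact (mem_roots hp0).2 (hroot ℓ)
  have h5 := Set.ncard_le_ncard hsub (p.roots.toFinset : Set ℂ).toFinite
  rw [Set.ncard_coe_finset] at h5
  have h6 : p.roots.toFinset.card ≤ p.natDegree :=
    (Multiset.toFinset_card_le _).trans (p.card_roots')
  omega


theorem stmt16' {n m : ℕ} (A : Matrix (Fin n) (Fin n) ℝ) (B : Matrix (Fin n) (Fin m) ℝ)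
    (hcol : LinearMap.range A.mulVecLin ≤ LinearMap.range B.mulVecLin)
    (PB : Matrix (Fin n) (Fin n) ℝ)
    (hPB : IsProjMatrix PB (LinearMap.range B.mulVecLin))
    (x : ℕ → Fin n → ℝ)
    (Pv : ℕ → Matrix (Fin n) (Fin n) ℝ)
    (hPv : ∀ t, IsProjMatrix (Pv t)
      (Submodule.span ℝ (Set.range fun i : Fin t => x i.val)))
    (hdyn : ∀ t, x (t + 1) = A.mulVec (x t) - (PB * A).mulVec ((Pv t).mulVec (x t)))
    (r : ℕ)
    (hvnot : ∀ t, t < r → (A ^ t).mulVec (x 0) ∉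
      Submodule.span ℝ (Set.range fun i : Fin t => (A ^ (i : ℕ)).mulVec (x 0))) :
    LinearIndependent ℝ (fun i : Fin r => x i.val) := by
  classical
  set v : ℕ → Fin n → ℝ := fun j => (A ^ j).mulVec (x 0) with hv
  set K : ℕ → Submodule ℝ (Fin n → ℝ) :=
    fun t => Submodule.span ℝ (Set.range fun i : Fin t => v (i : ℕ)) with hK
  set W : ℕ → Submodule ℝ (Fin n → ℝ) :=
    fun t => Submodule.span ℝ (Set.range fun i : Fin t => x (i : ℕ)) with hW
  have hvs : ∀ j, v (j + 1) = A.mulVec (v j) := by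
    intro j; rw [hv]; simp only [pow_succ']; rw [← mulVec_mulVec]
  have hPBA : ∀ y : Fin n → ℝ, PB.mulVec (A.mulVec y) = A.mulVec y := by
    intro y
    have hmem : A.mulVec y ∈ LinearMap.range B.mulVecLin := hcol ⟨y, rfl⟩
    rw [← hPB.2.2] at hmem
    obtain ⟨z, hz⟩ := hmem
    have hz' : PB.mulVec z = A.mulVec y := hz
    calc PB.mulVec (A.mulVec y) = PB.mulVec (PB.mulVec z) := by rw [hz']
      _ = (PB * PB).mulVec z := mulVec_mulVec z PB PB
      _ = PB.mulVec z := by rw [hPB.2.1]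
      _ = A.mulVec y := hz'
  have hstep : ∀ t, x (t + 1) = A.mulVec (x t) - A.mulVec ((Pv t).mulVec (x t)) := by
    intro t
    rw [hdyn t, ← mulVec_mulVec, hPBA]
  have hKmono : ∀ t, K t ≤ K (t + 1) := by
    intro t
    refine Submodule.span_mono ?_
    rintro _ ⟨i, rfl⟩
    exact ⟨⟨i.val, i.isLt.trans (Nat.lt_succ_self t)⟩, rfl⟩
  have hvK : ∀ t (i : Fin t), v (i : ℕ) ∈ K t :=
    fun t i => Submodule.subset_span ⟨i, rfl⟩
  have hxW : ∀ t (i : Fin t), x (i : ℕ) ∈ W t :=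
    fun t i => Submodule.subset_span ⟨i, rfl⟩
  have hAK : ∀ t, ∀ w ∈ K t, A.mulVec w ∈ K (t + 1) := by
    intro t w hw
    have hmap : Submodule.map A.mulVecLin (K t) ≤ K (t + 1) := by
      rw [hK, Submodule.map_span]
      refine Submodule.span_le.2 ?_
      rintro _ ⟨_, ⟨i, rfl⟩, rfl⟩
      refine Submodule.subset_span ⟨⟨i.val + 1, Nat.succ_lt_succ i.isLt⟩, ?_⟩
      show v (i.val + 1) = A.mulVecLin (v i.val)
      rw [hvs]; rfl
    exact hmap ⟨w, hw, rfl⟩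
  have main : ∀ t, W t = K t ∧ x t - v t ∈ K t := by
    intro t
    induction t with
    | zero =>
      constructor
      · show Submodule.span ℝ (Set.range fun i : Fin 0 => x (i : ℕ))
            = Submodule.span ℝ (Set.range fun i : Fin 0 => v (i : ℕ))
        rw [Set.range_eq_empty, Set.range_eq_empty]
      · have : v 0 = x 0 := by rw [hv]; simp
        rw [this, sub_self]; exact Submodule.zero_mem _
    | succ t ih =>
      obtain ⟨hWK, hxv⟩ := ih
      have hWK' : W (t + 1) = K (t + 1) := by
        apply le_antisymm
        · rw [hW, Submodule.span_le]
          rintro _ ⟨i, rfl⟩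
          induction i using Fin.lastCases with
          | last =>
            show x t ∈ K (t + 1)
            have : x t = v t + (x t - v t) := by abel
            rw [this]
            exact Submodule.add_mem _ (hvK (t + 1) ⟨t, Nat.lt_succ_self t⟩)
              (hKmono t hxv)
          | cast i =>
            show x (i : ℕ) ∈ K (t + 1)
            exact hKmono t (hWK ▸ hxW t i)
        · rw [hK, Submodule.span_le]
          rintro _ ⟨i, rfl⟩
          induction i using Fin.lastCases with
          | last =>
            show v t ∈ W (t + 1)
            have : v t = x t - (x t - v t) := by abel
            rw [this]
            have hWmono : W t ≤ W (t + 1) := by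
              refine Submodule.span_mono ?_
              rintro _ ⟨i, rfl⟩
              exact ⟨⟨i.val, i.isLt.trans (Nat.lt_succ_self t)⟩, rfl⟩
            exact Submodule.sub_mem _ (hxW (t + 1) ⟨t, Nat.lt_succ_self t⟩)
              (hWmono (hWK ▸ hxv))
          | cast i =>
            show v (i : ℕ) ∈ W (t + 1)
            have hWmono : W t ≤ W (t + 1) := by
              refine Submodule.span_mono ?_
              rintro _ ⟨i, rfl⟩
              exact ⟨⟨i.val, i.isLt.trans (Nat.lt_succ_self t)⟩, rfl⟩
            exact hWmono (hWK ▸ hvK t i)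
      refine ⟨hWK', ?_⟩
      have h1 : (Pv t).mulVec (x t) ∈ W t := by
        have h2 : (Pv t).mulVec (x t) ∈ LinearMap.range (Pv t).mulVecLin := ⟨x t, rfl⟩
        rw [(hPv t).2.2] at h2
        exact h2
      have e : x (t + 1) - v (t + 1)
          = A.mulVec (x t - v t) - A.mulVec ((Pv t).mulVec (x t)) := by
        rw [hstep t, hvs t, Matrix.mulVec_sub]
        abel
      rw [e]
      exact Submodule.sub_mem _ (hAK t _ hxv) (hAK t _ (hWK ▸ h1))
  have hind : ∀ t, t ≤ r → LinearIndependent ℝ (fun i : Fin t => x i.val) := by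
    intro t
    induction t with
    | zero => intro _; exact linearIndependent_empty_type
    | succ t ih =>
      intro h
      have h1 := ih (Nat.le_of_succ_le h)
      have hxnot : x t ∉ Submodule.span ℝ (Set.range fun i : Fin t => x i.val) := by
        intro hmem
        have h3 : x t ∈ K t := (main t).1 ▸ hmem
        have h2 := (main t).2
        have h4 : v t ∈ K t := by
          have : v t = x t - (x t - v t) := by abel
          rw [this]
          exact Submodule.sub_mem _ h3 h2
        exact hvnot t (Nat.lt_of_succ_le h) h4
      have hfam : (fun i : Fin (t + 1) => x i.val)
          = Fin.snoc (fun i : Fin t => x i.val) (x t) := by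
        funext i
        induction i using Fin.lastCases with
        | last => simp
        | cast j => simp [Fin.snoc_castSucc]
      rw [hfam]
      exact linearIndependent_fin_snoc.2 ⟨h1, hxnot⟩
  exact hind r le_rfl

/-- Linear independence of DGR data when `A` is diagonalizable and `R(A) ⊆ R(B)`. -/
theorem stmt16 {n m : ℕ} (A : Matrix (Fin n) (Fin n) ℝ) (B : Matrix (Fin n) (Fin m) ℝ)
    (hdiag : ∃ P D : Matrix (Fin n) (Fin n) ℂ,
      IsUnit P.det ∧ D.IsDiag ∧ A.map (algebraMap ℝ ℂ) = P * D * P⁻¹)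
    (hcol : LinearMap.range A.mulVecLin ≤ LinearMap.range B.mulVecLin)
    (PB : Matrix (Fin n) (Fin n) ℝ)
    (hPB : IsProjMatrix PB (LinearMap.range B.mulVecLin))
    (k : ℕ) (lam : Fin k → ℂ) (u : Fin k → (Fin n → ℂ))
    (hu : LinearIndependent ℂ u)
    (heig : ∀ ℓ, (A.map (algebraMap ℝ ℂ)).mulVec (u ℓ) = lam ℓ • u ℓ)
    (β : Fin k → ℂ) (hβ : ∀ ℓ, β ℓ ≠ 0)
    (x : ℕ → Fin n → ℝ)
    (hx0 : (fun j => (x 0 j : ℂ)) = ∑ ℓ, β ℓ • u ℓ)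
    (Pv : ℕ → Matrix (Fin n) (Fin n) ℝ)
    (hPv : ∀ t, IsProjMatrix (Pv t)
      (Submodule.span ℝ (Set.range fun i : Fin t => x i.val)))
    (hdyn : ∀ t, x (t + 1) = A.mulVec (x t) - (PB * A).mulVec ((Pv t).mulVec (x t)))
    (r : ℕ) (hrk : r ≤ k) (hcard : r ≤ (Set.range lam).ncard) :
    LinearIndependent ℝ (fun i : Fin r => x i.val) :=
  stmt16' A B hcol PB hPB x Pv hPv hdyn r
    (dgr_krylov_aux A lam u hu heig β hβ (x 0) hx0 hcard)
end
end
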